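/- arXiv:1912.08105 — 5 statements merged into one kernel-verified Lean document; each statement's English description precedes it below -/
import Mathlib

section
/- Suppose Im A ⊆ D₀(g(A)). Then the operator g(A)A is bounded relative to A: there exists a constant C > 0 such that ‖g(A)(Ax)‖ ≤ C(‖x‖ + ‖Ax‖) for all x ∈ D(A). -/
open MeasureTheory Filter Topology Set

noncomputable section

/-- `IsGen T x y` means `x` lies in the domain `D(A)` of the generator `A` of the
`C₀`-semigroup `T` and `A x = y`. -/
def IsGen {X : Type*} [NormedAddCommGroup X] [NormedSpace ℂ X]
    (T : ℝ → X →L[ℂ] X) (x y : X) : Prop :=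
  Tendsto (fun t : ℝ => t⁻¹ • (T t x - x)) (𝓝[>] (0 : ℝ)) (𝓝 y)

open intervalIntegral
section Helpers
set_option linter.unusedSectionVars false

variable {X : Type*} [NormedAddCommGroup X] [NormedSpace ℂ X] [CompleteSpace X]
  {T : ℝ → X →L[ℂ] X}

lemma T_intervalIntegrable (hTcont : ∀ x : X, ContinuousOn (fun t => T t x) (Ici (0:ℝ)))
    (y : X) {t : ℝ} (ht : 0 ≤ t) :
    IntervalIntegrable (fun u => T u y) MeasureTheory.volume 0 t := by
  apply ContinuousOn.intervalIntegrable
  rw [uIcc_of_le ht]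
  exact (hTcont y).mono (Icc_subset_Ici_self)

lemma primitive_hasDerivWithinAt (hTcont : ∀ x : X, ContinuousOn (fun t => T t x) (Ici (0:ℝ)))
    (y : X) {b : ℝ} (hb : 0 ≤ b) :
    HasDerivWithinAt (fun s => ∫ u in (0:ℝ)..s, T u y) (T b y) (Ici b) b := by
  apply intervalIntegral.integral_hasDerivWithinAt_right (t := Ioi b)
      (T_intervalIntegrable hTcont y hb)
  · exact ⟨Ici 0, mem_of_superset self_mem_nhdsWithin (fun u hu => le_of_lt (lt_of_le_of_lt hb hu)),
      ((hTcont y).aestronglyMeasurable measurableSet_Ici)⟩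
  · exact ((hTcont y) b hb).mono (fun u hu => le_of_lt (lt_of_le_of_lt hb hu))

lemma Ici_diff_singleton (b : ℝ) : Ici b \ {b} = Ioi b := by
  ext u; simp only [mem_diff, mem_Ici, mem_singleton_iff, mem_Ioi]
  constructor
  · rintro ⟨h1, h2⟩; exact lt_of_le_of_ne h1 (Ne.symm h2)
  · intro h1; exact ⟨le_of_lt h1, ne_of_gt h1⟩

lemma T_hasDerivWithinAt (hTadd : ∀ s t : ℝ, 0 ≤ s → 0 ≤ t → T (s + t) = (T s).comp (T t))
    {x y : X} (hxy : IsGen T x y) {b : ℝ} (hb : 0 ≤ b) :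
    HasDerivWithinAt (fun s => T s x) (T b y) (Ici b) b := by
  rw [hasDerivWithinAt_iff_tendsto_slope, Ici_diff_singleton]
  have hmap : Filter.map (fun ε : ℝ => b + ε) (𝓝[>] (0:ℝ)) = 𝓝[>] b := by
    have := (Homeomorph.addLeft b).isEmbedding.map_nhdsWithin_eq (Ioi (0:ℝ)) 0
    simpa [image_const_add_Ioi] using this
  rw [← hmap, tendsto_map'_iff]
  have key : (fun ε => T b (ε⁻¹ • (T ε x - x)))
      =ᶠ[𝓝[>] (0:ℝ)] (slope (fun s => T s x) b ∘ fun ε => b + ε) := by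
    filter_upwards [self_mem_nhdsWithin] with ε (hε : 0 < ε)
    simp only [Function.comp_apply, slope_def_module, add_sub_cancel_left]
    rw [hTadd b ε hb hε.le]
    simp [smul_sub, map_sub]
  exact Tendsto.congr' key (((T b).continuous.tendsto y).comp hxy)

lemma FTC_identity (hT0 : T 0 = ContinuousLinearMap.id ℂ X)
    (hTadd : ∀ s t : ℝ, 0 ≤ s → 0 ≤ t → T (s + t) = (T s).comp (T t))
    (hTcont : ∀ x : X, ContinuousOn (fun t => T t x) (Ici (0:ℝ)))
    {x y : X} (hxy : IsGen T x y) {t : ℝ} (ht : 0 ≤ t) :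
    T t x - x = ∫ u in (0:ℝ)..t, T u y := by
  set F : ℝ → X := fun s => T s x - ∫ u in (0:ℝ)..s, T u y with hF
  have hcont : ContinuousOn F (Icc 0 t) := by
    apply ContinuousOn.sub
    · exact ((hTcont x).mono Icc_subset_Ici_self)
    · have : IntegrableOn (fun u => T u y) (uIcc (0:ℝ) t) MeasureTheory.volume := by
        rw [uIcc_of_le ht]
        exact (T_intervalIntegrable hTcont y ht).1.congr_set_ae Ioc_ae_eq_Icc.symm
      exact (continuousOn_primitive_interval this).mono (by rw [uIcc_of_le ht])
  have hderiv : ∀ s ∈ Ico (0:ℝ) t, HasDerivWithinAt F 0 (Ici s) s := by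
    intro s hs
    have h1 := T_hasDerivWithinAt hTadd hxy hs.1
    have h2 := primitive_hasDerivWithinAt hTcont y hs.1
    exact (h1.sub h2).congr_deriv (sub_self _)
  have := norm_image_sub_le_of_norm_deriv_right_le_segment (f' := fun _ => (0:X)) (C := 0)
    hcont hderiv (fun s _ => by simp) t (right_mem_Icc.2 ht)
  rw [zero_mul] at this
  have h0 : F 0 = x := by
    simp [hF, hT0, intervalIntegral.integral_same]
  have : F t = F 0 := by
    have := norm_le_zero_iff.1 this
    rwa [sub_eq_zero] at this
  rw [h0] at this
  have h2 : T t x - ∫ u in (0:ℝ)..t, T u y = x := this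
  calc T t x - x = T t x - (T t x - ∫ u in (0:ℝ)..t, T u y) := by rw [h2]
    _ = ∫ u in (0:ℝ)..t, T u y := by abel


lemma isGen_of_FTC (hT0 : T 0 = ContinuousLinearMap.id ℂ X)
    (hTcont : ∀ x : X, ContinuousOn (fun t => T t x) (Ici (0:ℝ)))
    {x y : X} (hid : ∀ t : ℝ, 0 ≤ t → T t x - x = ∫ u in (0:ℝ)..t, T u y) :
    IsGen T x y := by
  have h1 := primitive_hasDerivWithinAt hTcont y (le_refl (0:ℝ))
  rw [hasDerivWithinAt_iff_tendsto_slope, Ici_diff_singleton] at h1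
  rw [hT0] at h1
  have key : (slope (fun s => ∫ u in (0:ℝ)..s, T u y) 0)
      =ᶠ[𝓝[>] (0:ℝ)] (fun t : ℝ => t⁻¹ • (T t x - x)) := by
    filter_upwards [self_mem_nhdsWithin] with t (ht : 0 < t)
    simp only [slope_def_module, sub_zero, intervalIntegral.integral_same]
    rw [hid t ht.le]
  exact Tendsto.congr' key h1

/-- The operator `y ↦ ∫ u in 0..t, T u y` as a continuous linear map. -/
def intOp (T : ℝ → X →L[ℂ] X)
    (hTcont : ∀ x : X, ContinuousOn (fun t => T t x) (Ici (0:ℝ)))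
    {M : ℝ} (hM : ∀ t : ℝ, 0 ≤ t → ‖T t‖ ≤ M) {t : ℝ} (ht : 0 ≤ t) : X →L[ℂ] X :=
  LinearMap.mkContinuous
    { toFun := fun y => ∫ u in (0:ℝ)..t, T u y
      map_add' := fun y z => by
        rw [← intervalIntegral.integral_add (T_intervalIntegrable hTcont y ht)
          (T_intervalIntegrable hTcont z ht)]
        simp
      map_smul' := fun c y => by
        rw [← intervalIntegral.integral_smul]
        simp }
    (M * t)
    (fun y => by
      have := intervalIntegral.norm_integral_le_of_norm_le_const (C := M * ‖y‖)
        (f := fun u => T u y) (a := (0:ℝ)) (b := t) ?_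
      · simpa [abs_of_nonneg ht, mul_comm, mul_assoc, mul_left_comm] using this
      · intro u hu
        rw [uIoc_of_le ht] at hu
        exact le_trans ((T u).le_opNorm y)
          (mul_le_mul_of_nonneg_right (hM u hu.1.le) (norm_nonneg y)))

lemma isClosed_isGen (hT0 : T 0 = ContinuousLinearMap.id ℂ X)
    (hTadd : ∀ s t : ℝ, 0 ≤ s → 0 ≤ t → T (s + t) = (T s).comp (T t))
    (hTcont : ∀ x : X, ContinuousOn (fun t => T t x) (Ici (0:ℝ)))
    {M : ℝ} (hM : ∀ t : ℝ, 0 ≤ t → ‖T t‖ ≤ M) :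
    IsClosed {p : X × X | IsGen T p.1 p.2} := by
  have : {p : X × X | IsGen T p.1 p.2} =
      ⋂ (t : ℝ), ⋂ (ht : 0 ≤ t), {p : X × X | T t p.1 - p.1 = intOp T hTcont hM ht p.2} := by
    ext p
    simp only [mem_setOf_eq, mem_iInter]
    constructor
    · intro hp t ht
      exact FTC_identity hT0 hTadd hTcont hp ht
    · intro hp
      exact isGen_of_FTC hT0 hTcont (fun t ht => hp t ht)
  rw [this]
  refine isClosed_iInter (fun t => isClosed_iInter (fun ht => isClosed_eq ?_ ?_))
  · exact ((T t).continuous.comp continuous_fst).sub continuous_fst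
  · exact (intOp T hTcont hM ht).continuous.comp continuous_snd

end Helpers

/-- The (σ-finite, regular) complex Borel measure `a` on `[0,∞)` is encoded
by its polar decomposition `da = h dμ` where `μ = |a|` is a σ-finite locally finite positive
Borel measure and `‖h t‖ = 1`; the Hille–Phillips operator is
`g(A)x = ∫_{[0,∞)} h t • T t x ∂μ` with domain `D₀(g(A))` the set of `x` for which the
integrand is Bochner integrable. If `Im A ⊆ D₀(g(A))`, then `g(A)A` is bounded relative to
`A`: there is `C > 0` with `‖g(A)(Ax)‖ ≤ C(‖x‖ + ‖Ax‖)` for all `x ∈ D(A)`. -/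
theorem stmt1 {X : Type*} [NormedAddCommGroup X] [NormedSpace ℂ X] [CompleteSpace X]
    (T : ℝ → X →L[ℂ] X)
    (hT0 : T 0 = ContinuousLinearMap.id ℂ X)
    (hTadd : ∀ s t : ℝ, 0 ≤ s → 0 ≤ t → T (s + t) = (T s).comp (T t))
    (hTcont : ∀ x : X, ContinuousOn (fun t => T t x) (Ici (0 : ℝ)))
    (hTbdd : ∃ M : ℝ, ∀ t : ℝ, 0 ≤ t → ‖T t‖ ≤ M)
    (μ : Measure ℝ) [SigmaFinite μ] [IsLocallyFiniteMeasure μ]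
    (h : ℝ → ℂ) (hmeas : Measurable h) (hnorm : ∀ t, ‖h t‖ = 1)
    (hRange : ∀ x y : X, IsGen T x y → IntegrableOn (fun t => h t • T t y) (Ici (0 : ℝ)) μ) :
    ∃ C > (0 : ℝ), ∀ x y : X, IsGen T x y →
      ‖∫ t in Ici (0 : ℝ), h t • T t y ∂μ‖ ≤ C * (‖x‖ + ‖y‖) := by
  obtain ⟨M0, hM0⟩ := hTbdd
  set M : ℝ := max M0 1 with hMdef
  have hM : ∀ t : ℝ, 0 ≤ t → ‖T t‖ ≤ M := fun t ht => (hM0 t ht).trans (le_max_left _ _)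
  -- the graph of the generator as a submodule
  let G : Submodule ℂ (X × X) :=
    { carrier := {p : X × X | IsGen T p.1 p.2}
      add_mem' := by
        rintro p q (hp : IsGen T p.1 p.2) (hq : IsGen T q.1 q.2)
        show IsGen T (p.1 + q.1) (p.2 + q.2)
        have heq : (fun t : ℝ => t⁻¹ • (T t (p.1 + q.1) - (p.1 + q.1))) =
            fun t : ℝ => t⁻¹ • (T t p.1 - p.1) + t⁻¹ • (T t q.1 - q.1) := by
          funext t
          rw [← smul_add, map_add]
          congr 1
          abel
        unfold IsGen
        rw [heq]
        exact hp.add hq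
      zero_mem' := by
        show IsGen T (0 : X) 0
        have heq : (fun t : ℝ => t⁻¹ • (T t (0:X) - 0)) = fun _ : ℝ => (0:X) := by
          funext t; simp
        unfold IsGen
        rw [heq]
        exact tendsto_const_nhds
      smul_mem' := by
        rintro c p (hp : IsGen T p.1 p.2)
        show IsGen T (c • p.1) (c • p.2)
        have heq : (fun t : ℝ => t⁻¹ • (T t (c • p.1) - c • p.1)) =
            fun t : ℝ => c • (t⁻¹ • (T t p.1 - p.1)) := by
          funext t
          rw [ContinuousLinearMap.map_smul, ← smul_sub, smul_comm]
        unfold IsGen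
        rw [heq]
        exact hp.const_smul c }
  have hGc : IsClosed (G : Set (X × X)) := isClosed_isGen hT0 hTadd hTcont hM
  haveI : CompleteSpace G := hGc.completeSpace_coe
  -- integrability on finite intervals
  have hInt : ∀ (y : X) (N : ℕ), IntegrableOn (fun t => h t • T t y) (Icc (0:ℝ) N) μ := by
    intro y N
    have hmble : AEStronglyMeasurable (fun t => h t • T t y) (μ.restrict (Icc (0:ℝ) N)) :=
      (hmeas.aestronglyMeasurable.restrict).smul
        (((hTcont y).mono Icc_subset_Ici_self).aestronglyMeasurable measurableSet_Icc)
    refine ⟨hmble, ?_⟩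
    apply MeasureTheory.HasFiniteIntegral.restrict_of_bounded (C := M * ‖y‖) measure_Icc_lt_top
    rw [ae_restrict_iff' measurableSet_Icc]
    filter_upwards with t ht
    rw [norm_smul, hnorm, one_mul]
    exact le_trans ((T t).le_opNorm y)
      (mul_le_mul_of_nonneg_right (hM t ht.1) (norm_nonneg y))
  -- pointwise norm bound for the integrand
  have hptw : ∀ (y : X) (N : ℕ), ∀ t ∈ Icc (0:ℝ) N, ‖h t • T t y‖ ≤ M * ‖y‖ := by
    intro y N t ht
    rw [norm_smul, hnorm, one_mul]
    exact le_trans ((T t).le_opNorm y)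
      (mul_le_mul_of_nonneg_right (hM t ht.1) (norm_nonneg y))
  -- the truncated operators
  let Φ : ℕ → G →L[ℂ] X := fun N =>
    LinearMap.mkContinuous
      { toFun := fun p => ∫ t in Icc (0:ℝ) N, h t • T t (p : X × X).2 ∂μ
        map_add' := fun p q => by
          have heq : ∀ t : ℝ, h t • T t ((↑(p + q) : X × X)).2 =
              h t • T t ((p : X × X)).2 + h t • T t ((q : X × X)).2 := by
            intro t
            rw [Submodule.coe_add, Prod.snd_add, map_add, smul_add]
          show (∫ t in Icc (0:ℝ) N, h t • T t ((↑(p + q) : X × X)).2 ∂μ) =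
            (∫ t in Icc (0:ℝ) N, h t • T t ((p : X × X)).2 ∂μ) +
              ∫ t in Icc (0:ℝ) N, h t • T t ((q : X × X)).2 ∂μ
          rw [MeasureTheory.integral_congr_ae (Eventually.of_forall heq)]
          exact MeasureTheory.integral_add (hInt _ N) (hInt _ N)
        map_smul' := fun c p => by
          have heq : ∀ t : ℝ, h t • T t ((↑(c • p) : X × X)).2 =
              c • (h t • T t ((p : X × X)).2) := by
            intro t
            rw [Submodule.coe_smul, Prod.smul_snd, ContinuousLinearMap.map_smul, smul_comm]
          show (∫ t in Icc (0:ℝ) N, h t • T t ((↑(c • p) : X × X)).2 ∂μ) =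
            c • ∫ t in Icc (0:ℝ) N, h t • T t ((p : X × X)).2 ∂μ
          rw [MeasureTheory.integral_congr_ae (Eventually.of_forall heq)]
          exact MeasureTheory.integral_smul c _ }
      (M * (μ (Icc (0:ℝ) N)).toReal)
      (fun p => by
        have h1 : ‖∫ t in Icc (0:ℝ) N, h t • T t ((p : X × X)).2 ∂μ‖ ≤
            (M * ‖((p : X × X)).2‖) * (μ (Icc (0:ℝ) N)).toReal :=
          by simpa [measureReal_def] using (norm_setIntegral_le_of_norm_le_const measure_Icc_lt_top
            (hptw ((p : X × X)).2 N))
        have h2 : ‖((p : X × X)).2‖ ≤ ‖p‖ := norm_snd_le (p : X × X)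
        calc ‖∫ t in Icc (0:ℝ) N, h t • T t ((p : X × X)).2 ∂μ‖
            ≤ (M * ‖((p : X × X)).2‖) * (μ (Icc (0:ℝ) N)).toReal := h1
          _ ≤ (M * ‖p‖) * (μ (Icc (0:ℝ) N)).toReal := by
              apply mul_le_mul_of_nonneg_right _ ENNReal.toReal_nonneg
              exact mul_le_mul_of_nonneg_left h2 (le_trans zero_le_one (le_max_right M0 1))
          _ = M * (μ (Icc (0:ℝ) N)).toReal * ‖p‖ := by ring)
  -- pointwise boundedness
  have hptbdd : ∀ p : G, ∃ C : ℝ, ∀ N : ℕ, ‖Φ N p‖ ≤ C := by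
    intro p
    have hp : IsGen T (p : X × X).1 (p : X × X).2 := p.2
    refine ⟨∫ t in Ici (0:ℝ), ‖h t • T t (p : X × X).2‖ ∂μ, fun N => ?_⟩
    have h1 : ‖Φ N p‖ ≤ ∫ t in Icc (0:ℝ) N, ‖h t • T t (p : X × X).2‖ ∂μ :=
      MeasureTheory.norm_integral_le_integral_norm _
    refine h1.trans ?_
    apply MeasureTheory.setIntegral_mono_set
    · exact (hRange _ _ hp).norm
    · filter_upwards with t using norm_nonneg _
    · exact HasSubset.Subset.eventuallyLE (fun t ht => ht.1)
  obtain ⟨C', hC'⟩ := banach_steinhaus hptbdd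
  have hC'0 : (0:ℝ) ≤ C' := le_trans (norm_nonneg (Φ 0)) (hC' 0)
  refine ⟨C' + 1, by linarith, fun x y hxy => ?_⟩
  set p : G := ⟨(x, y), hxy⟩ with hpdef
  -- convergence of truncations to the full integral
  have hmono : Monotone (fun N : ℕ => Icc (0:ℝ) N) := fun a b hab =>
    Icc_subset_Icc le_rfl (by exact_mod_cast hab)
  have hU : ⋃ N : ℕ, Icc (0:ℝ) (N:ℝ) = Ici (0:ℝ) := by
    ext u
    simp only [mem_iUnion, mem_Icc, mem_Ici]
    constructor
    · rintro ⟨N, hN1, _⟩; exact hN1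
    · intro hu
      obtain ⟨N, hN⟩ := exists_nat_ge u
      exact ⟨N, hu, hN⟩
  have htend : Tendsto (fun N : ℕ => ∫ t in Icc (0:ℝ) N, h t • T t y ∂μ) atTop
      (𝓝 (∫ t in Ici (0:ℝ), h t • T t y ∂μ)) := by
    have := MeasureTheory.tendsto_setIntegral_of_monotone (f := fun t => h t • T t y) (μ := μ)
      (fun N : ℕ => measurableSet_Icc) hmono (by rw [hU]; exact hRange x y hxy)
    rwa [hU] at this
  have hb : ∀ N : ℕ, ‖∫ t in Icc (0:ℝ) N, h t • T t y ∂μ‖ ≤ C' * ‖p‖ := by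
    intro N
    have : ‖Φ N p‖ ≤ ‖Φ N‖ * ‖p‖ := (Φ N).le_opNorm p
    exact le_trans this (mul_le_mul_of_nonneg_right (hC' N) (norm_nonneg p))
  have hlim : ‖∫ t in Ici (0:ℝ), h t • T t y ∂μ‖ ≤ C' * ‖p‖ :=
    le_of_tendsto' htend.norm hb
  have hpnorm : ‖p‖ ≤ ‖x‖ + ‖y‖ := by
    have : ‖p‖ = max ‖x‖ ‖y‖ := rfl
    rw [this]
    exact max_le (le_add_of_nonneg_right (norm_nonneg y)) (le_add_of_nonneg_left (norm_nonneg x))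
  calc ‖∫ t in Ici (0:ℝ), h t • T t y ∂μ‖ ≤ C' * ‖p‖ := hlim
    _ ≤ (C' + 1) * (‖x‖ + ‖y‖) := by
        have h1 : C' * ‖p‖ ≤ C' * (‖x‖ + ‖y‖) := mul_le_mul_of_nonneg_left hpnorm hC'0
        have h2 : (0:ℝ) ≤ ‖x‖ + ‖y‖ := by positivity
        nlinarith
end
end

section
/- Let α > 1 and define (−A)^{−α}x := (1/Γ(α)) ∫₀^∞ T(t)x t^{α−1} dt (Bochner integral), with domain D₀((−A)^{−α}) the set of x ∈ X for which this integral exists. Assume A is injective and there exist constants C > 0 and δ > α − 1 such that ‖T(t)‖ ≤ C/t^δ for all t > 0. Then Im A ⊆ D₀((−A)^{−α}) and the restriction of (−A)^{−α} to Im A is closed: if y_n ∈ Im A, y_n → y and (−A)^{−α}y_n → z in X, then y ∈ Im A and (−A)^{−α}y = z. -/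
open MeasureTheory Filter Topology Set

noncomputable section

/-- For `α > 1` define
`(−A)^{−α} x := Γ(α)⁻¹ • ∫₀^∞ t^{α−1} • T(t)x dt` with domain the set of `x` for which the
Bochner integral exists. If `A` is injective and `‖T(t)‖ ≤ C/t^δ` for all `t > 0` with
`C > 0`, `δ > α − 1`, then `Im A ⊆ D₀((−A)^{−α})` and the restriction of `(−A)^{−α}` to
`Im A` is closed: if `yₙ ∈ Im A`, `yₙ → y` and `(−A)^{−α} yₙ → z`, then `y ∈ Im A`
and `(−A)^{−α} y = z`. -/
theorem stmt9 {X : Type*} [NormedAddCommGroup X] [NormedSpace ℂ X] [CompleteSpace X]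
    (T : ℝ → X →L[ℂ] X)
    (hT0 : T 0 = ContinuousLinearMap.id ℂ X)
    (hTadd : ∀ s t : ℝ, 0 ≤ s → 0 ≤ t → T (s + t) = (T s).comp (T t))
    (hTcont : ∀ x : X, ContinuousOn (fun t => T t x) (Ici (0 : ℝ)))
    (hTbdd : ∃ M : ℝ, ∀ t : ℝ, 0 ≤ t → ‖T t‖ ≤ M)
    (α C δ : ℝ) (hα : 1 < α) (hC : 0 < C) (hδ : α - 1 < δ)
    (hInj : ∀ x₁ x₂ y : X, IsGen T x₁ y → IsGen T x₂ y → x₁ = x₂)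
    (hdecay : ∀ t : ℝ, 0 < t → ‖T t‖ ≤ C / t ^ δ) :
    (∀ y : X, (∃ x : X, IsGen T x y) →
      IntegrableOn (fun t => t ^ (α - 1) • T t y) (Ici (0 : ℝ)) volume) ∧
    ∀ (yseq : ℕ → X) (y z : X),
      (∀ n, ∃ x : X, IsGen T x (yseq n)) →
      Tendsto yseq atTop (𝓝 y) →
      Tendsto (fun n => (Real.Gamma α)⁻¹ • ∫ t in Ici (0 : ℝ), t ^ (α - 1) • T t (yseq n))
        atTop (𝓝 z) →
      (∃ x : X, IsGen T x y) ∧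
        (Real.Gamma α)⁻¹ • ∫ t in Ici (0 : ℝ), t ^ (α - 1) • T t y = z := by
  classical
  obtain ⟨M, hM⟩ := hTbdd
  set M₁ : ℝ := max M 1 with hM₁def
  have hM₁pos : (0:ℝ) < M₁ := lt_of_lt_of_le one_pos (le_max_right _ _)
  have hM₁ : ∀ t : ℝ, 0 ≤ t → ‖T t‖ ≤ M₁ := fun t ht => (hM t ht).trans (le_max_left _ _)
  have hδ0 : 0 < δ := lt_of_le_of_lt (by linarith) hδ
  set t₀ : ℝ := max 1 ((2 * C) ^ (δ⁻¹)) with ht₀def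
  have ht₀pos : (0:ℝ) < t₀ := lt_of_lt_of_le one_pos (le_max_left _ _)
  have h2C : (0:ℝ) < 2 * C := by linarith
  have hTt₀ : ‖T t₀‖ ≤ 1 / 2 := by
    refine (hdecay t₀ ht₀pos).trans ?_
    have h1 : (2*C) ^ (δ⁻¹) ≤ t₀ := le_max_right _ _
    have h2 : ((2*C) ^ (δ⁻¹)) ^ δ ≤ t₀ ^ δ :=
      Real.rpow_le_rpow (Real.rpow_nonneg h2C.le _) h1 hδ0.le
    have h3 : ((2*C) ^ (δ⁻¹)) ^ δ = 2*C := Real.rpow_inv_rpow h2C.le hδ0.ne'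
    have h4 : 2*C ≤ t₀ ^ δ := h3 ▸ h2
    rw [div_le_div_iff₀ (lt_of_lt_of_le h2C h4) two_pos]
    linarith
  -- geometric decay along multiples of t₀
  have key : ∀ n : ℕ, ∀ t : ℝ, (n : ℝ) * t₀ ≤ t → ‖T t‖ ≤ M₁ * (1/2 : ℝ)^n := by
    intro n
    induction n with
    | zero => intro t ht; simpa using hM₁ t (by simpa using ht)
    | succ n ih =>
      intro t ht
      have hnt : (0:ℝ) ≤ (n:ℝ) * t₀ := mul_nonneg (Nat.cast_nonneg n) ht₀pos.le
      have htt : (n:ℝ)*t₀ + t₀ ≤ t := by push_cast at ht; linarith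
      have h1 : (0:ℝ) ≤ t - t₀ := by linarith
      have hsplit : T t = (T (t - t₀)).comp (T t₀) := by
        have := hTadd (t - t₀) t₀ h1 ht₀pos.le
        rwa [sub_add_cancel] at this
      rw [hsplit]
      calc ‖(T (t-t₀)).comp (T t₀)‖ ≤ ‖T (t-t₀)‖ * ‖T t₀‖ :=
            ContinuousLinearMap.opNorm_comp_le _ _
        _ ≤ (M₁ * (1/2)^n) * (1/2) := by
            apply mul_le_mul (ih _ (by linarith)) hTt₀ (norm_nonneg _) (by positivity)
        _ = M₁ * (1/2)^(n+1) := by ring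
  set ω : ℝ := Real.log 2 / t₀ with hωdef
  have hlog2 : 0 < Real.log 2 := Real.log_pos one_lt_two
  have hω : 0 < ω := div_pos hlog2 ht₀pos
  have expbd : ∀ t : ℝ, 0 ≤ t → ‖T t‖ ≤ (2*M₁) * Real.exp (-ω * t) := by
    intro t ht
    set n := ⌊t / t₀⌋₊ with hn
    have hdivnn : 0 ≤ t / t₀ := div_nonneg ht ht₀pos.le
    have hn1 : (n:ℝ) * t₀ ≤ t := by
      have hfl : (n:ℝ) ≤ t/t₀ := Nat.floor_le hdivnn
      calc (n:ℝ)*t₀ ≤ (t/t₀)*t₀ := mul_le_mul_of_nonneg_right hfl ht₀pos.le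
        _ = t := div_mul_cancel₀ _ ht₀pos.ne'
    have hn2 : t / t₀ < (n:ℝ) + 1 := Nat.lt_floor_add_one _
    have h12 : ((1:ℝ)/2)^n ≤ 2 * Real.exp (-ω * t) := by
      have e1 : ((1:ℝ)/2)^n = Real.exp ((n:ℝ) * Real.log (1/2)) := by
        rw [Real.exp_nat_mul, Real.exp_log (by norm_num : (0:ℝ) < 1/2)]
      have e2 : 2 * Real.exp (-ω*t) = Real.exp (Real.log 2 + (-ω*t)) := by
        rw [Real.exp_add, Real.exp_log two_pos]
      rw [e1, e2]
      apply Real.exp_le_exp.2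
      rw [one_div, Real.log_inv]
      have hωt : ω * t ≤ ((n:ℝ)+1) * Real.log 2 := by
        have h5 : (t/t₀) * Real.log 2 ≤ ((n:ℝ)+1) * Real.log 2 :=
          mul_le_mul_of_nonneg_right hn2.le hlog2.le
        have h6 : ω * t = (t/t₀) * Real.log 2 := by
          rw [hωdef]; field_simp
        linarith
      nlinarith
    calc ‖T t‖ ≤ M₁ * (1/2)^n := key n t hn1
      _ ≤ M₁ * (2 * Real.exp (-ω*t)) := mul_le_mul_of_nonneg_left h12 hM₁pos.le
      _ = (2*M₁) * Real.exp (-ω*t) := by ring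
  -- continuity of the integrand
  have contA : ∀ y : X, ContinuousOn (fun t : ℝ => t ^ (α-1) • T t y) (Ici 0) := by
    intro y
    apply ContinuousOn.smul (f := fun t : ℝ => t ^ (α-1)) ?_ (hTcont y)
    intro x _
    exact (Real.continuousAt_rpow_const x (α-1) (Or.inr (by linarith))).continuousWithinAt
  -- integrability of the fractional-power integrand, for every y
  have intA : ∀ y : X, IntegrableOn (fun t => t ^ (α - 1) • T t y) (Ici (0:ℝ)) volume := by
    intro y
    have hmeas : AEStronglyMeasurable (fun t => t ^ (α-1) • T t y) (volume.restrict (Ici 0)) :=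
      (contA y).aestronglyMeasurable measurableSet_Ici
    have hdom : IntegrableOn (fun t : ℝ => (2*M₁*‖y‖) * (t^(α-1) * Real.exp (-ω * t)))
        (Ici (0:ℝ)) volume := by
      have h1 : IntegrableOn (fun t : ℝ => t^(α-1) * Real.exp (-ω * t)) (Ioi (0:ℝ)) volume := by
        have := integrableOn_rpow_mul_exp_neg_mul_rpow (s := α-1) (p := 1) (b := ω)
          (by linarith) zero_lt_one hω
        simpa [Real.rpow_one] using this
      have h2 : IntegrableOn (fun t : ℝ => t^(α-1) * Real.exp (-ω * t)) (Ici (0:ℝ)) volume := by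
        rwa [integrableOn_Ici_iff_integrableOn_Ioi]
      exact h2.const_mul _
    refine Integrable.mono' hdom hmeas ?_
    filter_upwards [ae_restrict_mem measurableSet_Ici] with t ht
    have ht0 : (0:ℝ) ≤ t := ht
    have hrpow : (0:ℝ) ≤ t ^ (α-1) := Real.rpow_nonneg ht0 _
    rw [norm_smul, Real.norm_eq_abs, abs_of_nonneg hrpow]
    have hb : ‖T t y‖ ≤ (2*M₁) * Real.exp (-ω * t) * ‖y‖ := by
      calc ‖T t y‖ ≤ ‖T t‖ * ‖y‖ := (T t).le_opNorm y
        _ ≤ (2*M₁) * Real.exp (-ω * t) * ‖y‖ :=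
            mul_le_mul_of_nonneg_right (expbd t ht0) (norm_nonneg _)
    calc t ^ (α-1) * ‖T t y‖ ≤ t ^ (α-1) * ((2*M₁) * Real.exp (-ω * t) * ‖y‖) :=
          mul_le_mul_of_nonneg_left hb hrpow
      _ = (2*M₁*‖y‖) * (t^(α-1) * Real.exp (-ω * t)) := by ring
  -- integrability of t ↦ T t y
  have intB : ∀ y : X, IntegrableOn (fun t => T t y) (Ici (0:ℝ)) volume := by
    intro y
    have hmeas : AEStronglyMeasurable (fun t => T t y) (volume.restrict (Ici 0)) :=
      (hTcont y).aestronglyMeasurable measurableSet_Ici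
    have hdom : IntegrableOn (fun t : ℝ => (2*M₁*‖y‖) * Real.exp (-ω * t)) (Ici (0:ℝ)) volume := by
      have h1 : IntegrableOn (fun t : ℝ => Real.exp (-ω * t)) (Ioi (0:ℝ)) volume :=
        exp_neg_integrableOn_Ioi 0 hω
      have h2 : IntegrableOn (fun t : ℝ => Real.exp (-ω * t)) (Ici (0:ℝ)) volume := by
        rwa [integrableOn_Ici_iff_integrableOn_Ioi]
      exact h2.const_mul _
    refine Integrable.mono' hdom hmeas ?_
    filter_upwards [ae_restrict_mem measurableSet_Ici] with t ht
    have ht0 : (0:ℝ) ≤ t := ht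
    calc ‖T t y‖ ≤ ‖T t‖ * ‖y‖ := (T t).le_opNorm y
      _ ≤ (2*M₁) * Real.exp (-ω * t) * ‖y‖ :=
          mul_le_mul_of_nonneg_right (expbd t ht0) (norm_nonneg _)
      _ = (2*M₁*‖y‖) * Real.exp (-ω * t) := by ring
  -- norm bound for the fractional integral
  set K : ℝ := ∫ t in Ici (0:ℝ), t^(α-1) * ((2*M₁) * Real.exp (-ω * t)) with hKdef
  have Kbd : ∀ y : X, ‖∫ t in Ici (0:ℝ), t ^ (α - 1) • T t y‖ ≤ K * ‖y‖ := by
    intro y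
    have hg : Integrable (fun t : ℝ => (t^(α-1) * ((2*M₁) * Real.exp (-ω * t))) * ‖y‖)
        (volume.restrict (Ici 0)) := by
      have h1 : IntegrableOn (fun t : ℝ => t^(α-1) * Real.exp (-ω * t)) (Ici (0:ℝ)) volume := by
        have := integrableOn_rpow_mul_exp_neg_mul_rpow (s := α-1) (p := 1) (b := ω)
          (by linarith) zero_lt_one hω
        rw [integrableOn_Ici_iff_integrableOn_Ioi]
        simpa [Real.rpow_one] using this
      have h2 := (h1.const_mul (2*M₁)).mul_const ‖y‖
      exact h2.congr (ae_of_all _ fun t => by ring)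
    have hbound : ∀ᵐ t ∂(volume.restrict (Ici (0:ℝ))),
        ‖t ^ (α - 1) • T t y‖ ≤ (t^(α-1) * ((2*M₁) * Real.exp (-ω * t))) * ‖y‖ := by
      filter_upwards [ae_restrict_mem measurableSet_Ici] with t ht
      have ht0 : (0:ℝ) ≤ t := ht
      have hrpow : (0:ℝ) ≤ t ^ (α-1) := Real.rpow_nonneg ht0 _
      rw [norm_smul, Real.norm_eq_abs, abs_of_nonneg hrpow]
      have hb : ‖T t y‖ ≤ (2*M₁) * Real.exp (-ω * t) * ‖y‖ := by
        calc ‖T t y‖ ≤ ‖T t‖ * ‖y‖ := (T t).le_opNorm y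
          _ ≤ (2*M₁) * Real.exp (-ω * t) * ‖y‖ :=
              mul_le_mul_of_nonneg_right (expbd t ht0) (norm_nonneg _)
      calc t ^ (α-1) * ‖T t y‖ ≤ t ^ (α-1) * ((2*M₁) * Real.exp (-ω * t) * ‖y‖) :=
            mul_le_mul_of_nonneg_left hb hrpow
        _ = (t^(α-1) * ((2*M₁) * Real.exp (-ω * t))) * ‖y‖ := by ring
    have := norm_integral_le_of_norm_le hg hbound
    rwa [integral_mul_const] at this
  -- surjectivity of A
  have surj : ∀ y : X, ∃ x : X, IsGen T x y := by
    intro y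
    have hint : IntegrableOn (fun s => T s y) (Ici (0:ℝ)) volume := intB y
    set x : X := -∫ s in Ici (0:ℝ), T s y with hxdef
    refine ⟨x, ?_⟩
    have shift : ∀ t : ℝ, 0 < t → T t x - x = ∫ s in Ico (0:ℝ) t, T s y := by
      intro t ht
      have c1 : T t (∫ s in Ici (0:ℝ), T s y) = ∫ s in Ici (0:ℝ), T t (T s y) :=
        (ContinuousLinearMap.integral_comp_comm (T t) hint).symm
      have c2 : ∫ s in Ici (0:ℝ), T t (T s y) = ∫ s in Ici (0:ℝ), T (s + t) y := by
        apply setIntegral_congr_fun measurableSet_Ici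
        intro s hs
        have h6 := hTadd t s ht.le hs
        have h7 : T (t + s) y = T t (T s y) := by rw [h6]; rfl
        show T t (T s y) = T (s + t) y
        rw [add_comm s t]
        exact h7.symm
      have c3 : ∫ s in Ici (0:ℝ), T (s + t) y = ∫ u in Ici t, T u y := by
        have h := (measurePreserving_add_right volume t).setIntegral_image_emb
          (MeasurableEquiv.addRight t).measurableEmbedding (fun u => T u y) (Ici 0)
        rw [image_add_const_Ici, zero_add] at h
        exact h.symm
      have c4 : ∫ s in Ici (0:ℝ), T s y
          = (∫ s in Ico (0:ℝ) t, T s y) + ∫ s in Ici t, T s y := by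
        rw [← Ico_union_Ici_eq_Ici ht.le]
        exact setIntegral_union (Set.disjoint_left.mpr fun a ha hb => (not_le.mpr ha.2) hb)
          measurableSet_Ici (hint.mono_set Ico_subset_Ici_self)
          (hint.mono_set (Ici_subset_Ici.2 ht.le))
      have : T t x = -∫ u in Ici t, T u y := by
        rw [hxdef, map_neg, c1, c2, c3]
      rw [this, hxdef, c4]
      abel
    show Tendsto (fun t : ℝ => t⁻¹ • (T t x - x)) (𝓝[>] (0:ℝ)) (𝓝 y)
    have FTC : HasDerivWithinAt (fun u => ∫ s in (0:ℝ)..u, T s y) (T 0 y) (Ici 0) 0 := by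
      apply intervalIntegral.integral_hasDerivWithinAt_right (t := Ioi 0)
        (IntervalIntegrable.refl)
        (((hTcont y).mono Ioi_subset_Ici_self).stronglyMeasurableAtFilter_nhdsWithin
          measurableSet_Ioi 0)
        (((hTcont y).continuousWithinAt self_mem_Ici).mono Ioi_subset_Ici_self)
    rw [hasDerivWithinAt_iff_tendsto_slope, Ici_sdiff_left] at FTC
    have hT0y : T 0 y = y := by rw [hT0]; rfl
    rw [hT0y] at FTC
    refine FTC.congr' ?_
    filter_upwards [self_mem_nhdsWithin] with t ht
    have ht' : (0:ℝ) < t := ht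
    have hico : ∫ s in Ico (0:ℝ) t, T s y = ∫ s in (0:ℝ)..t, T s y := by
      rw [intervalIntegral.integral_of_le ht'.le, integral_Ico_eq_integral_Ioo,
        ← integral_Ioc_eq_integral_Ioo]
    rw [slope_def_module]
    simp only [sub_zero, intervalIntegral.integral_same]
    rw [← hico, ← shift t ht']
  refine ⟨fun y _ => intA y, ?_⟩
  intro yseq y z hmem hy hz
  refine ⟨surj y, ?_⟩
  have diff : ∀ n, ‖(∫ t in Ici (0:ℝ), t ^ (α-1) • T t (yseq n))
      - ∫ t in Ici (0:ℝ), t ^ (α-1) • T t y‖ ≤ K * ‖yseq n - y‖ := by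
    intro n
    have heq : (∫ t in Ici (0:ℝ), t ^ (α-1) • T t (yseq n))
        - ∫ t in Ici (0:ℝ), t ^ (α-1) • T t y
        = ∫ t in Ici (0:ℝ), t ^ (α-1) • T t (yseq n - y) := by
      rw [← integral_sub (intA (yseq n)) (intA y)]
      apply setIntegral_congr_fun measurableSet_Ici
      intro t _
      show t ^ (α-1) • T t (yseq n) - t ^ (α-1) • T t y = t ^ (α-1) • T t (yseq n - y)
      rw [map_sub, smul_sub]
    rw [heq]
    exact Kbd _
  have h0 : Tendsto (fun n => K * ‖yseq n - y‖) atTop (𝓝 0) := by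
    have h1 : Tendsto (fun n => ‖yseq n - y‖) atTop (𝓝 0) :=
      (tendsto_iff_norm_sub_tendsto_zero.mp hy)
    simpa using h1.const_mul K
  have h2 : Tendsto (fun n => (∫ t in Ici (0:ℝ), t ^ (α-1) • T t (yseq n))
      - ∫ t in Ici (0:ℝ), t ^ (α-1) • T t y) atTop (𝓝 0) :=
    squeeze_zero_norm diff h0
  have h3 : Tendsto (fun n => ∫ t in Ici (0:ℝ), t ^ (α-1) • T t (yseq n)) atTop
      (𝓝 (∫ t in Ici (0:ℝ), t ^ (α-1) • T t y)) :=
    tendsto_sub_nhds_zero_iff.mp h2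
  have h4 : Tendsto (fun n => (Real.Gamma α)⁻¹ • ∫ t in Ici (0:ℝ), t ^ (α-1) • T t (yseq n))
      atTop (𝓝 ((Real.Gamma α)⁻¹ • ∫ t in Ici (0:ℝ), t ^ (α-1) • T t y)) :=
    h3.const_smul _
  exact tendsto_nhds_unique h4 hz
end
end

section
/- Let 0 < α < 1 and assume there exist constants C > 0 and δ > α such that ‖T(t)‖ ≤ C/t^δ for all t > 0. Then for every x ∈ D(A) the Bochner integrals ∫₀^∞ T(t)(Ax) t^{α} dt and ∫₀^∞ T(t)x t^{α−1} dt both exist, t^{α}T(t)x → 0 as t → ∞, and (1/Γ(α+1)) ∫₀^∞ T(t)(−Ax) t^{α} dt = (1/Γ(α)) ∫₀^∞ T(t)x t^{α−1} dt. -/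
open MeasureTheory Filter Topology Set

noncomputable section

/-- Let `0 < α < 1` and suppose `‖T(t)‖ ≤ C/t^δ` for all `t > 0` with
`C > 0`, `δ > α`. Then for every `x ∈ D(A)` the Bochner integrals
`∫₀^∞ t^α • T(t)(Ax) dt` and `∫₀^∞ t^{α−1} • T(t)x dt` exist, `t^α • T(t)x → 0` as
`t → ∞`, and `Γ(α+1)⁻¹ • ∫₀^∞ t^α • T(t)(−Ax) dt = Γ(α)⁻¹ • ∫₀^∞ t^{α−1} • T(t)x dt`. -/
theorem stmt10 {X : Type*} [NormedAddCommGroup X] [NormedSpace ℂ X] [CompleteSpace X]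
    (T : ℝ → X →L[ℂ] X)
    (hT0 : T 0 = ContinuousLinearMap.id ℂ X)
    (hTadd : ∀ s t : ℝ, 0 ≤ s → 0 ≤ t → T (s + t) = (T s).comp (T t))
    (hTcont : ∀ x : X, ContinuousOn (fun t => T t x) (Ici (0 : ℝ)))
    (hTbdd : ∃ M : ℝ, ∀ t : ℝ, 0 ≤ t → ‖T t‖ ≤ M)
    (α C δ : ℝ) (hα0 : 0 < α) (hα1 : α < 1) (hC : 0 < C) (hδ : α < δ)
    (hdecay : ∀ t : ℝ, 0 < t → ‖T t‖ ≤ C / t ^ δ) :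
    ∀ x y : X, IsGen T x y →
      IntegrableOn (fun t => t ^ α • T t y) (Ici (0 : ℝ)) volume ∧
      IntegrableOn (fun t => t ^ (α - 1) • T t x) (Ici (0 : ℝ)) volume ∧
      Tendsto (fun t : ℝ => t ^ α • T t x) atTop (𝓝 (0 : X)) ∧
      (Real.Gamma (α + 1))⁻¹ • ∫ t in Ici (0 : ℝ), t ^ α • T t (-y) =
        (Real.Gamma α)⁻¹ • ∫ t in Ici (0 : ℝ), t ^ (α - 1) • T t x := by
  obtain ⟨M₀, hM₀⟩ := hTbdd
  set M : ℝ := max M₀ 1 with hMdef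
  have hM1 : (1:ℝ) ≤ M := le_max_right _ _
  have hM0 : (0:ℝ) < M := lt_of_lt_of_le one_pos hM1
  have hM : ∀ t : ℝ, 0 ≤ t → ‖T t‖ ≤ M := fun t ht => (hM₀ t ht).trans (le_max_left _ _)
  have hδ0 : 0 < δ := hα0.trans hδ
  -- amplification of the decay estimate
  have amplify : ∀ C₀ d : ℝ, 0 < C₀ → 0 < d → (∀ t : ℝ, 0 < t → ‖T t‖ ≤ C₀ / t ^ d) →
      ∀ t : ℝ, 0 < t → ‖T t‖ ≤ (C₀ * C₀ * 2 ^ (2*d)) / t ^ (2*d) := by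
    intro C₀ d hC₀ hd hb t ht
    have ht2 : (0:ℝ) < t/2 := by linarith
    have hsplit : T t = (T (t/2)).comp (T (t/2)) := by
      have := hTadd (t/2) (t/2) ht2.le ht2.le
      rwa [show t/2 + t/2 = t by ring] at this
    have h1 : ‖T t‖ ≤ ‖T (t/2)‖ * ‖T (t/2)‖ := by
      rw [hsplit]; exact ContinuousLinearMap.opNorm_comp_le _ _
    have h2 : ‖T (t/2)‖ ≤ C₀ / (t/2) ^ d := hb _ ht2
    have hpos : (0:ℝ) < (t/2) ^ d := Real.rpow_pos_of_pos ht2 d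
    have h3 : ‖T t‖ ≤ (C₀ / (t/2)^d) * (C₀ / (t/2)^d) :=
      h1.trans (mul_le_mul h2 h2 (norm_nonneg _) (by positivity))
    have key : (C₀ / (t/2)^d) * (C₀ / (t/2)^d) = (C₀ * C₀ * 2^(2*d)) / t^(2*d) := by
      have e1 : (t/2)^d * (t/2)^d = t^(2*d) / 2^(2*d) := by
        rw [← Real.rpow_add ht2, Real.div_rpow ht.le (by norm_num : (0:ℝ) ≤ 2)]
        norm_num [two_mul]
      rw [div_mul_div_comm, e1, div_div_eq_mul_div]
    calc ‖T t‖ ≤ _ := h3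
      _ = _ := key
  -- iterate: get exponent 2^k * δ
  have iter : ∀ k : ℕ, ∃ C' : ℝ, 0 < C' ∧ ∀ t : ℝ, 0 < t → ‖T t‖ ≤ C' / t ^ ((2:ℝ)^k * δ) := by
    intro k
    induction k with
    | zero => exact ⟨C, hC, by simpa using hdecay⟩
    | succ n ih =>
      obtain ⟨C', hC', hb⟩ := ih
      refine ⟨C' * C' * 2 ^ (2*((2:ℝ)^n*δ)), by positivity, ?_⟩
      intro t ht
      have := amplify _ _ hC' (by positivity) hb t ht
      rw [show (2:ℝ)^(n+1)*δ = 2*((2:ℝ)^n*δ) by ring]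
      exact this
  obtain ⟨k, hk⟩ : ∃ k : ℕ, (α + 1)/δ < (2:ℝ)^k := pow_unbounded_of_one_lt _ one_lt_two
  obtain ⟨C', hC', hdec'⟩ := iter k
  set δ' : ℝ := (2:ℝ)^k * δ with hδ'def
  have hδ'1 : α + 1 < δ' := by
    rw [hδ'def]
    calc α + 1 = ((α+1)/δ) * δ := by field_simp
      _ < (2:ℝ)^k * δ := by
          apply mul_lt_mul_of_pos_right hk hδ0
  -- continuity facts
  have hcontat : ∀ (z : X) (t : ℝ), 0 < t → ContinuousAt (fun s => T s z) t := by
    intro z t ht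
    exact (hTcont z).continuousAt (Ici_mem_nhds ht)
  have contz : ∀ (z : X) (β : ℝ), ContinuousOn (fun t : ℝ => t ^ β • T t z) (Ioi 0) := by
    intro z β
    apply ContinuousOn.smul (f := fun t : ℝ => t ^ β)
    · intro t ht
      exact (Real.continuousAt_rpow_const t β (Or.inl (ne_of_gt ht))).continuousWithinAt
    · exact (hTcont z).mono Ioi_subset_Ici_self
  -- the master integrability lemma
  have key_int : ∀ (z : X) (β : ℝ), -1 < β → β - δ' < -1 →
      IntegrableOn (fun t : ℝ => t ^ β • T t z) (Ioi 0) := by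
    intro z β hβ hβ'
    rw [show Ioi (0:ℝ) = Ioc 0 1 ∪ Ioi 1 from (Ioc_union_Ioi_eq_Ioi zero_le_one).symm]
    apply IntegrableOn.union
    · have hdom : IntegrableOn (fun t : ℝ => M * ‖z‖ * t ^ β) (Ioc (0:ℝ) 1) :=
        (intervalIntegral.intervalIntegrable_rpow' hβ).1.const_mul _
      apply Integrable.mono' hdom
      · exact ((contz z β).mono Ioc_subset_Ioi_self).aestronglyMeasurable measurableSet_Ioc
      · rw [ae_restrict_iff' measurableSet_Ioc]
        apply ae_of_all
        intro t ht
        have ht0 : (0:ℝ) < t := ht.1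
        rw [norm_smul, Real.norm_eq_abs, abs_of_nonneg (Real.rpow_nonneg ht0.le _)]
        have h1 : ‖T t z‖ ≤ M * ‖z‖ :=
          ((T t).le_opNorm z).trans (mul_le_mul_of_nonneg_right (hM t ht0.le) (norm_nonneg z))
        calc t ^ β * ‖T t z‖ ≤ t ^ β * (M * ‖z‖) :=
              mul_le_mul_of_nonneg_left h1 (Real.rpow_nonneg ht0.le _)
          _ = M * ‖z‖ * t ^ β := by ring
    · have hdom : IntegrableOn (fun t : ℝ => C' * ‖z‖ * t ^ (β - δ')) (Ioi (1:ℝ)) :=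
        (integrableOn_Ioi_rpow_of_lt hβ' one_pos).const_mul _
      apply Integrable.mono' hdom
      · exact ((contz z β).mono (Ioi_subset_Ioi zero_le_one)).aestronglyMeasurable
          measurableSet_Ioi
      · rw [ae_restrict_iff' measurableSet_Ioi]
        apply ae_of_all
        intro t ht
        have ht0 : (0:ℝ) < t := lt_trans one_pos ht
        rw [norm_smul, Real.norm_eq_abs, abs_of_nonneg (Real.rpow_nonneg ht0.le _)]
        have h1 : ‖T t z‖ ≤ C' / t ^ δ' * ‖z‖ :=
          ((T t).le_opNorm z).trans (mul_le_mul_of_nonneg_right (hdec' t ht0) (norm_nonneg z))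
        calc t ^ β * ‖T t z‖ ≤ t ^ β * (C' / t ^ δ' * ‖z‖) :=
              mul_le_mul_of_nonneg_left h1 (Real.rpow_nonneg ht0.le _)
          _ = C' * ‖z‖ * t ^ (β - δ') := by
              rw [Real.rpow_sub ht0, div_eq_mul_inv, div_eq_mul_inv]; ring
  -- main part
  intro x y hxy
  have hg1 : IntegrableOn (fun t : ℝ => t ^ α • T t y) (Ioi 0) :=
    key_int y α (by linarith) (by linarith)
  have hg2 : IntegrableOn (fun t : ℝ => t ^ (α - 1) • T t x) (Ioi 0) :=
    key_int x (α - 1) (by linarith) (by linarith)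
  -- decay of the orbit
  have hlim : Tendsto (fun t : ℝ => t ^ α • T t x) atTop (𝓝 (0:X)) := by
    have hb : ∀ᶠ t in atTop, ‖t ^ α • T t x‖ ≤ C' * ‖x‖ * t ^ (α - δ') := by
      filter_upwards [eventually_gt_atTop (0:ℝ)] with t ht0
      rw [norm_smul, Real.norm_eq_abs, abs_of_nonneg (Real.rpow_nonneg ht0.le _)]
      have h1 : ‖T t x‖ ≤ C' / t ^ δ' * ‖x‖ :=
        ((T t).le_opNorm x).trans (mul_le_mul_of_nonneg_right (hdec' t ht0) (norm_nonneg x))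
      calc t ^ α * ‖T t x‖ ≤ t ^ α * (C' / t ^ δ' * ‖x‖) :=
            mul_le_mul_of_nonneg_left h1 (Real.rpow_nonneg ht0.le _)
        _ = C' * ‖x‖ * t ^ (α - δ') := by
            rw [Real.rpow_sub ht0, div_eq_mul_inv, div_eq_mul_inv]; ring
    have h2 : Tendsto (fun t : ℝ => t ^ (α - δ')) atTop (𝓝 0) := by
      have := tendsto_rpow_neg_atTop (show (0:ℝ) < δ' - α by linarith)
      convert this using 2
      ring_nf
    have h3 : Tendsto (fun t : ℝ => C' * ‖x‖ * t ^ (α - δ')) atTop (𝓝 0) := by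
      simpa using h2.const_mul (C' * ‖x‖)
    exact squeeze_zero_norm' hb h3
  -- differentiability of the orbit
  have hderiv : ∀ t : ℝ, 0 < t → HasDerivAt (fun s : ℝ => T s x) (T t y) t := by
    intro t ht
    rw [hasDerivAt_iff_tendsto_slope, ← nhdsLT_sup_nhdsGT, tendsto_sup]
    constructor
    · -- left limit
      have hmem : Ioo (0:ℝ) t ∈ 𝓝[<] t := Ioo_mem_nhdsLT_of_mem ⟨ht, le_refl t⟩
      have hsub : Tendsto (fun s : ℝ => t - s) (𝓝[<] t) (𝓝[>] (0:ℝ)) := by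
        apply tendsto_nhdsWithin_of_tendsto_nhds_of_eventually_within
        · have : Tendsto (fun s : ℝ => t - s) (𝓝 t) (𝓝 (t - t)) :=
            (continuous_const.sub continuous_id).tendsto t
          simpa using this.mono_left nhdsWithin_le_nhds
        · filter_upwards [self_mem_nhdsWithin] with s hs
          simpa [mem_Ioi, sub_pos] using hs
      have hw : Tendsto (fun s : ℝ => (t - s)⁻¹ • (T (t - s) x - x)) (𝓝[<] t) (𝓝 y) :=
        hxy.comp hsub
      have heq : ∀ᶠ s in 𝓝[<] t, slope (fun u : ℝ => T u x) t s
          = T s ((t - s)⁻¹ • (T (t - s) x - x)) := by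
        filter_upwards [hmem] with s hs
        have hs0 : (0:ℝ) < s := hs.1
        have hst : s < t := hs.2
        have e1 : T t x = T s (T (t - s) x) := by
          have := hTadd s (t - s) hs0.le (by linarith)
          rw [show s + (t - s) = t by ring] at this
          rw [this]; rfl
        rw [slope_def_module, (T s).map_smul_of_tower, map_sub, ← e1]
        rw [show s - t = -(t - s) by ring, inv_neg, neg_smul, smul_sub, smul_sub]
        abel
      rw [tendsto_congr' heq]
      have hnorm : Tendsto (fun s : ℝ =>
          M * ‖(t - s)⁻¹ • (T (t - s) x - x) - y‖ + ‖T s y - T t y‖) (𝓝[<] t) (𝓝 0) := by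
        have h1 : Tendsto (fun s : ℝ => M * ‖(t - s)⁻¹ • (T (t - s) x - x) - y‖)
            (𝓝[<] t) (𝓝 0) := by
          have h0 : Tendsto (fun s : ℝ => (t - s)⁻¹ • (T (t - s) x - x) - y) (𝓝[<] t) (𝓝 0) := by
            simpa using hw.sub_const y
          simpa using h0.norm.const_mul M
        have h2 : Tendsto (fun s : ℝ => ‖T s y - T t y‖) (𝓝[<] t) (𝓝 0) := by
          have h0 : Tendsto (fun s : ℝ => T s y - T t y) (𝓝[<] t) (𝓝 0) := by
            have h00 : Tendsto (fun s : ℝ => T s y) (𝓝[<] t) (𝓝 (T t y)) :=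
              (hcontat y t ht).tendsto.mono_left nhdsWithin_le_nhds
            simpa using h00.sub_const (T t y)
          simpa using h0.norm
        simpa using h1.add h2
      rw [tendsto_iff_norm_sub_tendsto_zero]
      apply squeeze_zero' (Eventually.of_forall fun s => norm_nonneg _) _ hnorm
      filter_upwards [hmem] with s hs
      have hs0 : (0:ℝ) < s := hs.1
      set w := (t - s)⁻¹ • (T (t - s) x - x)
      have e2 : T s w - T t y = (T s w - T s y) + (T s y - T t y) := by abel
      have e3 : ‖T s w - T s y‖ ≤ M * ‖w - y‖ := by
        rw [← map_sub]
        exact ((T s).le_opNorm _).trans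
          (mul_le_mul_of_nonneg_right (hM s hs0.le) (norm_nonneg _))
      calc ‖T s w - T t y‖ ≤ ‖T s w - T s y‖ + ‖T s y - T t y‖ := by rw [e2]; exact norm_add_le _ _
        _ ≤ M * ‖w - y‖ + ‖T s y - T t y‖ := add_le_add_left e3 _
    · -- right limit
      have hsub : Tendsto (fun s : ℝ => s - t) (𝓝[>] t) (𝓝[>] (0:ℝ)) := by
        apply tendsto_nhdsWithin_of_tendsto_nhds_of_eventually_within
        · have : Tendsto (fun s : ℝ => s - t) (𝓝 t) (𝓝 (t - t)) :=
            (continuous_id.sub continuous_const).tendsto t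
          simpa using this.mono_left nhdsWithin_le_nhds
        · filter_upwards [self_mem_nhdsWithin] with s hs
          simpa [mem_Ioi, sub_pos] using hs
      have hcomp : Tendsto (fun s : ℝ => T t ((s - t)⁻¹ • (T (s - t) x - x)))
          (𝓝[>] t) (𝓝 (T t y)) := ((T t).continuous.tendsto y).comp (hxy.comp hsub)
      apply Tendsto.congr' _ hcomp
      filter_upwards [self_mem_nhdsWithin] with s hs
      have hst : t < s := hs
      have e1 : T s x = T t (T (s - t) x) := by
        have := hTadd t (s - t) ht.le (by linarith)
        rw [show t + (s - t) = s by ring] at this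
        rw [this]; rfl
      rw [slope_def_module, (T t).map_smul_of_tower, map_sub, ← e1]
  -- derivative of t^α • T t x
  have hderF : ∀ t : ℝ, 0 < t → HasDerivAt (fun s : ℝ => s ^ α • T s x)
      (α • (t ^ (α - 1) • T t x) + t ^ α • T t y) t := by
    intro t ht
    have h1 : HasDerivAt (fun s : ℝ => s ^ α) (α * t ^ (α - 1)) t :=
      Real.hasDerivAt_rpow_const (Or.inl ht.ne')
    have := h1.smul (hderiv t ht)
    simpa [smul_smul, add_comm, Pi.smul_def'] using this
  have hint0 : IntegrableOn (fun t : ℝ => α • (t ^ (α - 1) • T t x) + t ^ α • T t y) (Ioi 0) :=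
    (hg2.smul α).add hg1
  -- the equality on Ioi ε
  have hIoiε : ∀ ε : ℝ, 0 < ε →
      (∫ t in Ioi ε, (α • (t ^ (α - 1) • T t x) + t ^ α • T t y)) = -(ε ^ α • T ε x) := by
    intro ε hε
    have hintε : IntegrableOn (fun t : ℝ => α • (t ^ (α - 1) • T t x) + t ^ α • T t y) (Ioi ε) :=
      hint0.mono_set (Ioi_subset_Ioi hε.le)
    have l1 := intervalIntegral_tendsto_integral_Ioi ε hintε
      (tendsto_id (x := atTop (α := ℝ)))
    have l2 : Tendsto (fun R : ℝ => R ^ α • T R x - ε ^ α • T ε x) atTop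
        (𝓝 ((0:X) - ε ^ α • T ε x)) := hlim.sub_const _
    have heq : (fun R : ℝ => ∫ t in ε..R, (α • (t ^ (α - 1) • T t x) + t ^ α • T t y))
        =ᶠ[atTop] fun R : ℝ => R ^ α • T R x - ε ^ α • T ε x := by
      filter_upwards [eventually_ge_atTop ε] with R hR
      apply intervalIntegral.integral_eq_sub_of_hasDerivAt
      · intro t htmem
        rw [uIcc_of_le hR] at htmem
        exact hderF t (lt_of_lt_of_le hε htmem.1)
      · rw [intervalIntegrable_iff_integrableOn_Ioc_of_le hR]
        exact hintε.mono_set Ioc_subset_Ioi_self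
    have := tendsto_nhds_unique (l1.congr' heq) l2
    rw [this, zero_sub]
  -- pass to the limit ε → 0
  have hzero : (∫ t in Ioi (0:ℝ), (α • (t ^ (α - 1) • T t x) + t ^ α • T t y)) = 0 := by
    have hU : (⋃ n : ℕ, Ioi (((n:ℝ)+1)⁻¹)) = Ioi (0:ℝ) := by
      ext t
      simp only [mem_iUnion, mem_Ioi]
      constructor
      · rintro ⟨n, hn⟩
        exact lt_trans (by positivity) hn
      · intro htpos
        obtain ⟨n, hn⟩ := exists_nat_one_div_lt htpos
        exact ⟨n, by simpa [one_div] using hn⟩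
    have hmono : Monotone (fun n : ℕ => Ioi (((n:ℝ)+1)⁻¹)) := by
      intro m n hmn
      apply Ioi_subset_Ioi
      have h1 : (m:ℝ) + 1 ≤ (n:ℝ) + 1 := by exact_mod_cast Nat.succ_le_succ hmn
      exact inv_anti₀ (by positivity) h1
    have hseq := tendsto_setIntegral_of_monotone (fun n : ℕ => measurableSet_Ioi) hmono
      (f := fun t : ℝ => α • (t ^ (α - 1) • T t x) + t ^ α • T t y) (μ := volume)
      (by rw [hU]; exact hint0)
    rw [hU] at hseq
    have hε0 : Tendsto (fun n : ℕ => (((n:ℝ)+1)⁻¹)) atTop (𝓝 0) := by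
      simpa [one_div] using tendsto_one_div_add_atTop_nhds_zero_nat (𝕜 := ℝ)
    have hrz : Tendsto (fun n : ℕ => (((n:ℝ)+1)⁻¹) ^ α) atTop (𝓝 0) := by
      have hc : ContinuousAt (fun s : ℝ => s ^ α) 0 :=
        Real.continuousAt_rpow_const 0 α (Or.inr hα0.le)
      have := hc.tendsto.comp hε0
      simpa [Function.comp_def, Real.zero_rpow hα0.ne'] using this
    have hrhs : Tendsto (fun n : ℕ => ((((n:ℝ)+1)⁻¹) ^ α • T (((n:ℝ)+1)⁻¹) x)) atTop
        (𝓝 (0:X)) := by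
      apply squeeze_zero_norm (a := fun n : ℕ => (((n:ℝ)+1)⁻¹) ^ α * (M * ‖x‖))
      · intro n
        have hp : (0:ℝ) < ((n:ℝ)+1)⁻¹ := by positivity
        rw [norm_smul, Real.norm_eq_abs, abs_of_nonneg (Real.rpow_nonneg hp.le _)]
        have h1 : ‖T (((n:ℝ)+1)⁻¹) x‖ ≤ M * ‖x‖ :=
          ((T _).le_opNorm x).trans
            (mul_le_mul_of_nonneg_right (hM _ hp.le) (norm_nonneg x))
        exact mul_le_mul_of_nonneg_left h1 (Real.rpow_nonneg hp.le _)
      · simpa using hrz.mul_const (M * ‖x‖)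
    have h2 := hseq.congr (fun n : ℕ => hIoiε (((n:ℝ)+1)⁻¹) (by positivity))
    have h1 : Tendsto (fun n : ℕ => -((((n:ℝ)+1)⁻¹) ^ α • T (((n:ℝ)+1)⁻¹) x)) atTop
        (𝓝 (-(0:X))) := hrhs.neg
    have := tendsto_nhds_unique h2 h1
    rw [neg_zero] at this
    -- `this : ∫ ... = 0` but direction: hseq.congr replaced function values; limit is the integral
    exact this
  have hsplit : (∫ t in Ioi (0:ℝ), (α • (t ^ (α - 1) • T t x) + t ^ α • T t y))
      = α • (∫ t in Ioi (0:ℝ), t ^ (α - 1) • T t x) + ∫ t in Ioi (0:ℝ), t ^ α • T t y := by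
    have hf2 : IntegrableOn (fun t : ℝ => α • (t ^ (α - 1) • T t x)) (Ioi 0) := hg2.smul α
    rw [integral_add hf2 hg1, integral_smul]
  have hkey : (∫ t in Ioi (0:ℝ), t ^ α • T t y)
      = -(α • ∫ t in Ioi (0:ℝ), t ^ (α - 1) • T t x) := by
    apply eq_neg_of_add_eq_zero_right
    rw [← hsplit]
    exact hzero
  refine ⟨?_, ?_, hlim, ?_⟩
  · rw [integrableOn_Ici_iff_integrableOn_Ioi]; exact hg1
  · rw [integrableOn_Ici_iff_integrableOn_Ioi]; exact hg2
  · rw [integral_Ici_eq_integral_Ioi, integral_Ici_eq_integral_Ioi]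
    have hneg : (∫ t in Ioi (0:ℝ), t ^ α • T t (-y))
        = -∫ t in Ioi (0:ℝ), t ^ α • T t y := by
      rw [← integral_neg]
      apply setIntegral_congr_fun measurableSet_Ioi
      intro t _
      simp
    rw [hneg, hkey, neg_neg, smul_smul]
    congr 1
    rw [Real.Gamma_add_one hα0.ne']
    have hΓ : 0 < Real.Gamma α := Real.Gamma_pos_of_pos hα0
    field_simp
end
end

section
/- Let ρ be a positive Borel measure on (0,∞) such that ρ((0,r]) < ∞ and ∫_{(r,∞)} u^{-1} dρ(u) < ∞ for every r > 0. Define f(r) := ∫_{(r,∞)} u^{-1} dρ(u) for r > 0. Then for every s < 0: ∫_{(0,∞)} (e^{su} − 1) u^{-1} dρ(u) = s · ∫₀^∞ e^{sr} f(r) dr; equivalently, the function ψ(s) := ∫_{(0,∞)} (e^{su} − 1)u^{-1} dρ(u) satisfies ψ(s)/s = ∫₀^∞ e^{sr} f(r) dr for s < 0. -/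
open MeasureTheory Filter Topology Set

noncomputable section

/-- Let `ρ` be a positive Borel measure on `(0,∞)` with
`ρ((0,r]) < ∞` and `∫_{(r,∞)} u⁻¹ dρ(u) < ∞` for every `r > 0`, and set
`f(r) := ∫_{(r,∞)} u⁻¹ dρ(u)`. Then for every `s < 0`:
`∫_{(0,∞)} (e^{su} − 1) u⁻¹ dρ(u) = s · ∫₀^∞ e^{sr} f(r) dr`. -/
theorem stmt11 (ρ : Measure ℝ)
    (hρfin : ∀ r : ℝ, 0 < r → ρ (Ioc (0 : ℝ) r) < ⊤)
    (hρint : ∀ r : ℝ, 0 < r → IntegrableOn (fun u : ℝ => u⁻¹) (Ioi r) ρ) :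
    ∀ s : ℝ, s < 0 →
      ∫ u in Ioi (0 : ℝ), (Real.exp (s * u) - 1) * u⁻¹ ∂ρ =
        s * ∫ r in Ioi (0 : ℝ), Real.exp (s * r) * (∫ u in Ioi r, u⁻¹ ∂ρ) := by
  intro s hs
  have hs0 : s ≠ 0 := ne_of_lt hs
  set μ : Measure ℝ := ρ.restrict (Ioi 0) with hμ
  set ν : Measure ℝ := (volume : Measure ℝ).restrict (Ioi 0) with hν
  set F : ℝ → ℝ → ℝ := fun u r =>
    ({p : ℝ × ℝ | 0 < p.2 ∧ p.2 < p.1}.indicator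
      (fun p : ℝ × ℝ => Real.exp (s * p.2) * p.1⁻¹)) (u, r) with hF
  -- measurability of the uncurried function
  have hAmeas : MeasurableSet {p : ℝ × ℝ | 0 < p.2 ∧ p.2 < p.1} := by
    exact (measurableSet_lt measurable_const measurable_snd).inter
      (measurableSet_lt measurable_snd measurable_fst)
  have hFmeas : AEStronglyMeasurable (Function.uncurry F) (μ.prod ν) := by
    apply Measurable.aestronglyMeasurable
    apply Measurable.indicator _ hAmeas
    exact ((Real.measurable_exp.comp (measurable_snd.const_mul s)).mul
      measurable_fst.inv)
  -- inner integral over r for fixed u > 0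
  have hinner : ∀ u : ℝ, 0 < u →
      ∫ r, F u r ∂ν = (Real.exp (s * u) - 1) * u⁻¹ * s⁻¹ := by
    intro u hu
    have hset : ∀ r : ℝ, F u r = (Ioo (0:ℝ) u).indicator
        (fun r => Real.exp (s * r) * u⁻¹) r := by
      intro r
      by_cases h : r ∈ Ioo (0:ℝ) u
      · rw [indicator_of_mem h]
        rw [hF]; simp only
        rw [indicator_of_mem (by exact ⟨h.1, h.2⟩)]
      · rw [indicator_of_notMem h]
        rw [hF]; simp only
        rw [indicator_of_notMem (by simpa [Set.mem_Ioo] using h)]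
    simp only [hset]
    rw [hν, integral_indicator measurableSet_Ioo,
      Measure.restrict_restrict measurableSet_Ioo,
      Set.Ioo_inter_Ioi (b := (0:ℝ)) (c := (0:ℝ))]
    · have : max (0:ℝ) 0 = 0 := by simp
      rw [this]
      rw [← integral_Ioc_eq_integral_Ioo, ← intervalIntegral.integral_of_le hu.le]
      rw [intervalIntegral.integral_mul_const]
      have : ∫ r in (0:ℝ)..u, Real.exp (s * r)
          = s⁻¹ * (Real.exp (s * u) - 1) := by
        rw [intervalIntegral.integral_comp_mul_left (fun x => Real.exp x) hs0]
        simp [Real.exp_zero, smul_eq_mul]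
      rw [this]; ring
  -- inner integral over u for fixed r > 0
  have hinner2 : ∀ r : ℝ, 0 < r →
      ∫ u, F u r ∂μ = Real.exp (s * r) * ∫ u in Ioi r, u⁻¹ ∂ρ := by
    intro r hr
    have hset : ∀ u : ℝ, F u r = (Ioi r).indicator
        (fun u => Real.exp (s * r) * u⁻¹) u := by
      intro u
      by_cases h : u ∈ Ioi r
      · rw [indicator_of_mem h, hF]; simp only
        rw [indicator_of_mem (by exact ⟨hr, h⟩)]
      · rw [indicator_of_notMem h, hF]; simp only
        rw [indicator_of_notMem]
        simp only [Set.mem_setOf_eq, not_and]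
        intro _; simpa [Set.mem_Ioi] using h
    simp only [hset]
    rw [hμ, integral_indicator measurableSet_Ioi,
      Measure.restrict_restrict measurableSet_Ioi]
    have : Ioi r ∩ Ioi (0:ℝ) = Ioi r := by
      rw [Set.inter_eq_left]
      exact fun x hx => lt_trans hr hx
    rw [this, integral_const_mul]
  -- integrability of the norm-integral bound
  have hbound : ∀ u : ℝ, 0 < u →
      ∫ r, ‖F u r‖ ∂ν = (Real.exp (s * u) - 1) * u⁻¹ * s⁻¹ := by
    intro u hu
    have hnn : ∀ r : ℝ, ‖F u r‖ = F u r := by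
      intro r
      rw [Real.norm_eq_abs, abs_of_nonneg]
      rw [hF]
      apply Set.indicator_nonneg
      intro p hp
      have hp1 : 0 < p.1 := lt_trans hp.1 hp.2
      positivity
    simp only [hnn]
    exact hinner u hu
  -- the key integrability on the product
  have hFint : Integrable (Function.uncurry F) (μ.prod ν) := by
    rw [integrable_prod_iff hFmeas]
    constructor
    · -- a.e. u, integrable in r
      filter_upwards [self_mem_ae_restrict (measurableSet_Ioi : MeasurableSet (Ioi (0:ℝ)))]
        with u hu
      have hset : ∀ r : ℝ, F u r = (Ioo (0:ℝ) u).indicator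
          (fun r => Real.exp (s * r) * u⁻¹) r := by
        intro r
        by_cases h : r ∈ Ioo (0:ℝ) u
        · rw [indicator_of_mem h, hF]; simp only
          rw [indicator_of_mem (by exact ⟨h.1, h.2⟩)]
        · rw [indicator_of_notMem h, hF]; simp only
          rw [indicator_of_notMem (by simpa [Set.mem_Ioo] using h)]
      simp only [Function.uncurry_apply_pair]
      simp only [hset]
      rw [hν, integrable_indicator_iff measurableSet_Ioo]
      have hc : Continuous (fun r : ℝ => Real.exp (s * r) * u⁻¹) :=
        (Real.continuous_exp.comp (continuous_const.mul continuous_id)).mul continuous_const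
      have h1 : IntegrableOn (fun r : ℝ => Real.exp (s * r) * u⁻¹) (Ioo 0 u) volume :=
        (hc.integrableOn_Ioc).mono_set Set.Ioo_subset_Ioc_self
      exact h1.restrict
    · -- the function u ↦ ∫ ‖F u r‖ dr is integrable w.r.t. μ
      have hmeas2 : AEStronglyMeasurable (fun u => ∫ r, ‖F u r‖ ∂ν) μ := by
        exact (hFmeas.norm.integral_prod_right')
      -- bound function
      set B : ℝ → ℝ := fun u => (Ioc (0:ℝ) 1).indicator (fun _ => (1:ℝ)) u
        + (Ioi (1:ℝ)).indicator (fun u => (-s)⁻¹ * u⁻¹) u with hB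
      have hBint : Integrable B μ := by
        apply Integrable.add
        · rw [hμ, integrable_indicator_iff measurableSet_Ioc]
          apply (integrableOn_const_iff (C := (1:ℝ))).mpr
          right
          exact lt_of_le_of_lt (Measure.restrict_apply_le _ _) (hρfin 1 one_pos)
        · rw [hμ, integrable_indicator_iff measurableSet_Ioi]
          have h1 : IntegrableOn (fun u : ℝ => (-s)⁻¹ * u⁻¹) (Ioi 1) ρ :=
            (hρint 1 one_pos).const_mul _
          have h2 : Ioi (1:ℝ) ∩ Ioi 0 = Ioi 1 := by
            rw [Set.inter_eq_left]; exact fun x hx => lt_trans (one_pos : (0:ℝ) < 1) hx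
          unfold IntegrableOn
          rw [Measure.restrict_restrict measurableSet_Ioi, h2]
          exact h1
      apply Integrable.mono hBint hmeas2
      filter_upwards [self_mem_ae_restrict (measurableSet_Ioi : MeasurableSet (Ioi (0:ℝ)))]
        with u hu
      rw [hbound u hu]
      have hu' : (0:ℝ) < u := hu
      have hsneg : (0:ℝ) < -s := by linarith
      have hsu : s * u ≤ 0 := by nlinarith
      have hexp : Real.exp (s * u) - 1 ≤ 0 := by
        have h := Real.exp_le_one_iff.mpr hsu
        linarith
      have hmain : (Real.exp (s * u) - 1) * u⁻¹ * s⁻¹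
          = (1 - Real.exp (s * u)) * u⁻¹ * (-s)⁻¹ := by
        rw [← neg_inv]
        ring
      have hnn : 0 ≤ (Real.exp (s * u) - 1) * u⁻¹ * s⁻¹ := by
        rw [hmain]
        have h1 : 0 ≤ 1 - Real.exp (s * u) := by linarith
        positivity
      rw [Real.norm_eq_abs, abs_of_nonneg hnn]
      -- now show the bound
      by_cases hu1 : u ≤ 1
      · have hm : u ∈ Ioc (0:ℝ) 1 := ⟨hu', hu1⟩
        have hnm : u ∉ Ioi (1:ℝ) := by simp only [Set.mem_Ioi, not_lt]; exact hu1
        have hBv : B u = 1 := by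
          rw [hB]; simp only
          rw [indicator_of_mem hm, indicator_of_notMem hnm]
          ring
        rw [hBv, hmain]
        -- (1 - exp(su)) ≤ -s*u, so product ≤ 1
        have h1 : 1 - Real.exp (s * u) ≤ -(s * u) := by
          have := Real.add_one_le_exp (s * u)
          linarith
        have h2 : (1 - Real.exp (s * u)) * u⁻¹ * (-s)⁻¹ ≤ (-(s*u)) * u⁻¹ * (-s)⁻¹ := by
          apply mul_le_mul_of_nonneg_right (mul_le_mul_of_nonneg_right h1 (by positivity))
          positivity
        calc (1 - Real.exp (s * u)) * u⁻¹ * (-s)⁻¹ ≤ (-(s*u)) * u⁻¹ * (-s)⁻¹ := h2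
          _ = 1 := by field_simp
          _ ≤ ‖(1:ℝ)‖ := by rw [norm_one]
      · push_neg at hu1
        have hm : u ∈ Ioi (1:ℝ) := hu1
        have hnm : u ∉ Ioc (0:ℝ) 1 := by
          simp only [Set.mem_Ioc, not_and, not_le]; exact fun _ => hu1
        have hBv : B u = (-s)⁻¹ * u⁻¹ := by
          rw [hB]; simp only
          rw [indicator_of_notMem hnm, indicator_of_mem hm]
          ring
        rw [hBv, hmain]
        have h1 : 1 - Real.exp (s * u) ≤ 1 := by
          have := Real.exp_nonneg (s * u); linarith
        calc (1 - Real.exp (s * u)) * u⁻¹ * (-s)⁻¹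
            ≤ 1 * u⁻¹ * (-s)⁻¹ := by
              apply mul_le_mul_of_nonneg_right (mul_le_mul_of_nonneg_right h1 (by positivity))
              positivity
          _ = (-s)⁻¹ * u⁻¹ := by ring
          _ ≤ ‖(-s)⁻¹ * u⁻¹‖ := by
              rw [Real.norm_eq_abs]; exact le_abs_self _
  -- σ-finiteness of μ
  haveI hsf : SigmaFinite μ := by
    refine ⟨⟨⟨fun n => Iic 0 ∪ Ioc 0 (n+1), fun _ => trivial, ?_, ?_⟩⟩⟩
    · intro n
      refine lt_of_le_of_lt (measure_union_le _ _) ?_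
      have h1 : μ (Iic 0) = 0 := by
        rw [hμ, Measure.restrict_apply measurableSet_Iic]
        have : Iic (0:ℝ) ∩ Ioi 0 = ∅ := by
          ext x; simp only [Set.mem_inter_iff, Set.mem_Iic, Set.mem_Ioi, Set.mem_empty_iff_false,
            iff_false, not_and, not_lt]
          exact fun h => h
        rw [this, measure_empty]
      have h2 : μ (Ioc 0 (n+1)) < ⊤ :=
        lt_of_le_of_lt (hμ ▸ Measure.restrict_apply_le _ _)
          (hρfin (n+1) (by positivity))
      rw [h1, zero_add]
      exact h2
    · rw [Set.eq_univ_iff_forall]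
      intro x
      by_cases hx : x ≤ 0
      · exact Set.mem_iUnion.mpr ⟨0, Or.inl hx⟩
      · push_neg at hx
        obtain ⟨n, hn⟩ := exists_nat_gt x
        exact Set.mem_iUnion.mpr ⟨n, Or.inr ⟨hx, by push_cast; linarith⟩⟩
  -- Fubini
  have hswap : ∫ u, (∫ r, F u r ∂ν) ∂μ = ∫ r, (∫ u, F u r ∂μ) ∂ν :=
    integral_integral_swap hFint
  -- rewrite both sides
  have hL : ∫ u, (∫ r, F u r ∂ν) ∂μ
      = (∫ u in Ioi (0:ℝ), (Real.exp (s * u) - 1) * u⁻¹ ∂ρ) * s⁻¹ := by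
    rw [hμ, ← integral_mul_const]
    apply setIntegral_congr_fun measurableSet_Ioi
    intro u hu
    exact hinner u hu
  have hR : ∫ r, (∫ u, F u r ∂μ) ∂ν
      = ∫ r in Ioi (0:ℝ), Real.exp (s * r) * (∫ u in Ioi r, u⁻¹ ∂ρ) := by
    rw [hν]
    apply setIntegral_congr_fun measurableSet_Ioi
    intro r hr
    exact hinner2 r hr
  rw [hL, hR] at hswap
  calc ∫ u in Ioi (0:ℝ), (Real.exp (s * u) - 1) * u⁻¹ ∂ρ
      = s * ((∫ u in Ioi (0:ℝ), (Real.exp (s * u) - 1) * u⁻¹ ∂ρ) * s⁻¹) := by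
        field_simp
    _ = s * ∫ r in Ioi (0:ℝ), Real.exp (s * r) * (∫ u in Ioi r, u⁻¹ ∂ρ) := by
        rw [hswap]
end
end

section
/- Let ρ be a positive Borel measure on (0,∞) with ρ((0,r]) < ∞ and ∫_{(r,∞)} u^{-1} dρ(u) < ∞ for all r > 0, and set f(r) := ∫_{(r,∞)} u^{-1} dρ(u). Define ψ(A)x := ∫_{(0,∞)} (T(u)x − x) u^{-1} dρ(u) (Bochner integral, which exists for every x ∈ D(A)), and define ψ̃(A)x := ∫₀^∞ T(t)x f(t) dt with domain D₀(ψ̃(A)) = {x ∈ X : this Bochner integral exists}. Then for every x ∈ D(A) ∩ D₀(ψ̃(A)): ψ̃(A)x ∈ D(A) and A(ψ̃(A)x) = ψ(A)x. -/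
open MeasureTheory Filter Topology Set

noncomputable section

set_option linter.unusedSectionVars false

namespace Stmt12Aux

variable {X : Type*} [NormedAddCommGroup X] [NormedSpace ℂ X] [CompleteSpace X]
variable {T : ℝ → X →L[ℂ] X} {x y : X} {M : ℝ}

/-- The orbit `t ↦ T t x`, extended continuously to all of `ℝ`. -/
def orb (T : ℝ → X →L[ℂ] X) (x : X) : ℝ → X := fun t => T (max t 0) x

lemma orb_eq (ht : 0 ≤ t) : orb T x t = T t x := by
  simp [orb, max_eq_left ht]

lemma orb_cont (hTcont : ∀ x : X, ContinuousOn (fun t => T t x) (Ici (0 : ℝ))) :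
    Continuous (orb T x) := by
  have : Continuous fun t : ℝ => max t 0 := continuous_id.max continuous_const
  exact (hTcont x).comp_continuous this (fun t => show (0:ℝ) ≤ max t 0 from le_max_right _ _)

lemma orb_norm_le (hM : ∀ t : ℝ, 0 ≤ t → ‖T t‖ ≤ M) (t : ℝ) :
    ‖orb T x t‖ ≤ M * ‖x‖ := by
  refine le_trans ((T (max t 0)).le_opNorm x) ?_
  exact mul_le_mul_of_nonneg_right (hM _ (le_max_right _ _)) (norm_nonneg x)

lemma isGen_shift (hTadd : ∀ s t : ℝ, 0 ≤ s → 0 ≤ t → T (s + t) = (T s).comp (T t))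
    (hx : IsGen T x y) {t : ℝ} (ht : 0 ≤ t) :
    Tendsto (fun r => (r - t)⁻¹ • (T r x - T t x)) (𝓝[>] t) (𝓝 (T t y)) := by
  have h1 : Tendsto (fun r : ℝ => r - t) (𝓝[>] t) (𝓝[>] (0 : ℝ)) := by
    rw [tendsto_nhdsWithin_iff]
    constructor
    · have := (continuous_sub_right t).tendsto t
      simpa using this.mono_left nhdsWithin_le_nhds
    · filter_upwards [eventually_mem_nhdsWithin] with r hr
      exact sub_pos.mpr (mem_Ioi.mp hr)
  have h2 := ((T t).continuous.tendsto y).comp (hx.comp h1)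
  refine h2.congr' ?_
  filter_upwards [eventually_mem_nhdsWithin] with r (hr : t < r)
  have hrt : 0 ≤ r - t := le_of_lt (sub_pos.mpr hr)
  have : T r x = T t (T (r - t) x) := by
    have := hTadd t (r - t) ht hrt
    rw [show t + (r - t) = r by ring] at this
    rw [this]; rfl
  simp only [Function.comp_apply]
  rw [this, ← map_sub]
  exact ((T t).restrictScalars ℝ).map_smul _ _


lemma sub_eq_integral (hT0 : T 0 = ContinuousLinearMap.id ℂ X)
    (hTadd : ∀ s t : ℝ, 0 ≤ s → 0 ≤ t → T (s + t) = (T s).comp (T t))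
    (hTcont : ∀ x : X, ContinuousOn (fun t => T t x) (Ici (0 : ℝ)))
    (hx : IsGen T x y) {s : ℝ} (hs : 0 ≤ s) :
    T s x - x = ∫ r in (0:ℝ)..s, orb T y r := by
  have key := intervalIntegral.integral_eq_sub_of_hasDeriv_right_of_le hs
    (f := orb T x) (f' := orb T y)
    ((orb_cont hTcont).continuousOn)
    (fun t ht => ?_) ((orb_cont hTcont).intervalIntegrable 0 s)
  · rw [key, orb_eq hs, orb_eq le_rfl, hT0]; rfl
  · have ht0 : (0:ℝ) ≤ t := le_of_lt ht.1
    rw [hasDerivWithinAt_iff_tendsto_slope]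
    have hIoi : (Ioi t) \ {t} = Ioi t := Set.diff_singleton_eq_self (by simp)
    rw [hIoi]
    have h2 := isGen_shift hTadd hx ht0
    rw [orb_eq ht0]
    refine h2.congr' ?_
    filter_upwards [eventually_mem_nhdsWithin] with r (hr : t < r)
    rw [slope_def_module]
    rw [orb_eq (le_of_lt (lt_of_le_of_lt ht0 hr)), orb_eq ht0]

lemma norm_Tsub_le (hT0 : T 0 = ContinuousLinearMap.id ℂ X)
    (hTadd : ∀ s t : ℝ, 0 ≤ s → 0 ≤ t → T (s + t) = (T s).comp (T t))
    (hTcont : ∀ x : X, ContinuousOn (fun t => T t x) (Ici (0 : ℝ)))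
    (hM : ∀ t : ℝ, 0 ≤ t → ‖T t‖ ≤ M)
    (hx : IsGen T x y) {s : ℝ} (hs : 0 ≤ s) :
    ‖T s x - x‖ ≤ s * (M * ‖y‖) := by
  rw [sub_eq_integral hT0 hTadd hTcont hx hs]
  have := intervalIntegral.norm_integral_le_of_norm_le_const
    (C := M * ‖y‖) (f := orb T y) (a := 0) (b := s)
    (fun r _ => orb_norm_le hM r)
  simpa [abs_of_nonneg hs, mul_comm] using this


lemma part1 (hT0 : T 0 = ContinuousLinearMap.id ℂ X)
    (hTadd : ∀ s t : ℝ, 0 ≤ s → 0 ≤ t → T (s + t) = (T s).comp (T t))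
    (hTcont : ∀ x : X, ContinuousOn (fun t => T t x) (Ici (0 : ℝ)))
    (hM : ∀ t : ℝ, 0 ≤ t → ‖T t‖ ≤ M)
    {ρ : Measure ℝ}
    (hρfin : ∀ r : ℝ, 0 < r → ρ (Ioc (0 : ℝ) r) < ⊤)
    (hρint : ∀ r : ℝ, 0 < r → IntegrableOn (fun u : ℝ => u⁻¹) (Ioi r) ρ)
    (hx : IsGen T x y) :
    IntegrableOn (fun u => u⁻¹ • (T u x - x)) (Ioi (0 : ℝ)) ρ := by
  have hmeas : AEStronglyMeasurable (fun u => u⁻¹ • (T u x - x)) (ρ.restrict (Ioi 0)) := by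
    apply ContinuousOn.aestronglyMeasurable ?_ measurableSet_Ioi
    exact (continuousOn_id.inv₀ (fun u hu => ne_of_gt hu)).smul
      (((hTcont x).mono (Ioi_subset_Ici le_rfl)).sub continuousOn_const)
  have hsplit : Ioc (0:ℝ) 1 ∪ Ioi 1 = Ioi 0 := Ioc_union_Ioi_eq_Ioi zero_le_one
  rw [← hsplit]
  refine IntegrableOn.union ?_ ?_
  · refine ⟨hmeas.mono_set Ioc_subset_Ioi_self,
      HasFiniteIntegral.restrict_of_bounded (C := M * ‖y‖) (hρfin 1 one_pos) ?_⟩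
    rw [ae_restrict_iff' measurableSet_Ioc]
    filter_upwards with u hu
    rw [norm_smul, Real.norm_eq_abs, abs_of_pos (inv_pos.mpr hu.1)]
    calc u⁻¹ * ‖T u x - x‖ ≤ u⁻¹ * (u * (M * ‖y‖)) := by
          exact mul_le_mul_of_nonneg_left
            (norm_Tsub_le hT0 hTadd hTcont hM hx (le_of_lt hu.1)) (le_of_lt (inv_pos.mpr hu.1))
      _ = M * ‖y‖ := by rw [← mul_assoc, inv_mul_cancel₀ (ne_of_gt hu.1), one_mul]
  · refine Integrable.mono' (((hρint 1 one_pos).norm).const_mul ((M+1) * ‖x‖))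
      (hmeas.mono_set (Ioi_subset_Ioi zero_le_one)) ?_
    rw [ae_restrict_iff' measurableSet_Ioi]
    filter_upwards with u hu
    have hu0 : (0:ℝ) < u := lt_trans zero_lt_one hu
    have hnn : (0:ℝ) ≤ u⁻¹ := le_of_lt (inv_pos.mpr hu0)
    rw [norm_smul, Real.norm_eq_abs, abs_of_nonneg hnn, mul_comm ((M+1) * ‖x‖) u⁻¹]
    refine mul_le_mul_of_nonneg_left ?_ hnn
    calc ‖T u x - x‖ ≤ ‖T u x‖ + ‖x‖ := norm_sub_le _ _
      _ ≤ M * ‖x‖ + ‖x‖ := by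
          refine add_le_add_left (le_trans ((T u).le_opNorm x) ?_) _
          exact mul_le_mul_of_nonneg_right (hM u (le_of_lt hu0)) (norm_nonneg x)
      _ = (M+1) * ‖x‖ := by ring

/-- The primitive of the orbit. -/
def primOrb (T : ℝ → X →L[ℂ] X) (x : X) : ℝ → X := fun r => ∫ t in (0:ℝ)..r, orb T x t

lemma tendsto_avg (hTcont : ∀ x : X, ContinuousOn (fun t => T t x) (Ici (0 : ℝ))) (u : ℝ) :
    Tendsto (fun s => s⁻¹ • (primOrb T x (u + s) - primOrb T x u)) (𝓝[>] (0:ℝ))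
      (𝓝 (orb T x u)) := by
  have hD : HasDerivAt (primOrb T x) (orb T x u) u :=
    intervalIntegral.integral_hasDerivAt_right ((orb_cont hTcont).intervalIntegrable 0 u)
      ((orb_cont hTcont).stronglyMeasurable.stronglyMeasurableAtFilter)
      (orb_cont hTcont).continuousAt
  rw [hasDerivAt_iff_tendsto_slope] at hD
  have h1 : Tendsto (fun s : ℝ => u + s) (𝓝[>] (0:ℝ)) (𝓝[≠] u) := by
    rw [tendsto_nhdsWithin_iff]
    constructor
    · simpa using ((continuous_add_left u).tendsto 0).mono_left nhdsWithin_le_nhds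
    · filter_upwards [eventually_mem_nhdsWithin] with s (hs : 0 < s)
      simp [ne_of_gt hs]
  refine (hD.comp h1).congr' ?_
  filter_upwards [eventually_mem_nhdsWithin] with s (hs : 0 < s)
  simp only [Function.comp_apply, slope_def_module]
  congr 1
  ring


lemma primOrb_cont (hTcont : ∀ x : X, ContinuousOn (fun t => T t x) (Ici (0 : ℝ))) :
    Continuous (primOrb T x) := by
  refine continuous_iff_continuousAt.mpr (fun u => ?_)
  exact (intervalIntegral.integral_hasDerivAt_right ((orb_cont hTcont).intervalIntegrable 0 u)
      ((orb_cont hTcont).stronglyMeasurable.stronglyMeasurableAtFilter)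
      (orb_cont hTcont).continuousAt).continuousAt

lemma Ts_primOrb (hTadd : ∀ s t : ℝ, 0 ≤ s → 0 ≤ t → T (s + t) = (T s).comp (T t))
    (hTcont : ∀ x : X, ContinuousOn (fun t => T t x) (Ici (0 : ℝ)))
    {s u : ℝ} (hs : 0 ≤ s) (hu : 0 ≤ u) :
    T s (primOrb T x u) = primOrb T x (u + s) - primOrb T x s := by
  have hint : ∀ a b : ℝ, IntervalIntegrable (orb T x) volume a b :=
    fun a b => (orb_cont hTcont).intervalIntegrable a b
  have e1 : T s (primOrb T x u) = ∫ t in (0:ℝ)..u, T s (orb T x t) :=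
    ((T s).intervalIntegral_comp_comm (hint 0 u)).symm
  have e2 : ∀ t ∈ Set.uIcc (0:ℝ) u, T s (orb T x t) = orb T x (t + s) := by
    intro t ht
    rw [Set.uIcc_of_le hu] at ht
    have ht0 : (0:ℝ) ≤ t := ht.1
    rw [orb_eq ht0, orb_eq (by linarith : (0:ℝ) ≤ t + s)]
    have := hTadd s t hs ht0
    rw [add_comm t s, this]; rfl
  rw [e1, intervalIntegral.integral_congr e2,
    intervalIntegral.integral_comp_add_right (orb T x) s, zero_add]
  have e3 : primOrb T x s + (∫ t in s..(u+s), orb T x t) = primOrb T x (u+s) :=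
    intervalIntegral.integral_add_adjacent_intervals (hint 0 s) (hint s (u+s))
  rw [← e3]; abel

lemma diff_eq (hTadd : ∀ s t : ℝ, 0 ≤ s → 0 ≤ t → T (s + t) = (T s).comp (T t))
    (hTcont : ∀ x : X, ContinuousOn (fun t => T t x) (Ici (0 : ℝ)))
    {s u : ℝ} (hs : 0 ≤ s) (hu : 0 ≤ u) :
    T s (primOrb T x u) - primOrb T x u
      = ∫ t in (0:ℝ)..s, (orb T x (t + u) - orb T x t) := by
  have hint : ∀ a b : ℝ, IntervalIntegrable (orb T x) volume a b :=
    fun a b => (orb_cont hTcont).intervalIntegrable a b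
  have hshift : (∫ t in (0:ℝ)..s, orb T x (t + u))
      = primOrb T x (s + u) - primOrb T x u := by
    rw [intervalIntegral.integral_comp_add_right (orb T x) u, zero_add]
    have e3 : primOrb T x u + (∫ t in u..(s+u), orb T x t) = primOrb T x (s+u) :=
      intervalIntegral.integral_add_adjacent_intervals (hint 0 u) (hint u (s+u))
    rw [← e3]; abel
  have hc : Continuous (fun t : ℝ => orb T x (t + u)) :=
    (orb_cont hTcont).comp (continuous_add_right u)
  rw [intervalIntegral.integral_sub (hc.intervalIntegrable 0 s) (hint 0 s), hshift,
    Ts_primOrb hTadd hTcont hs hu, add_comm u s]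
  show _ = _ - primOrb T x s
  abel

lemma bound_a (hT0 : T 0 = ContinuousLinearMap.id ℂ X)
    (hTadd : ∀ s t : ℝ, 0 ≤ s → 0 ≤ t → T (s + t) = (T s).comp (T t))
    (hTcont : ∀ x : X, ContinuousOn (fun t => T t x) (Ici (0 : ℝ)))
    (hM : ∀ t : ℝ, 0 ≤ t → ‖T t‖ ≤ M)
    (hx : IsGen T x y) {s u : ℝ} (hs : 0 ≤ s) (hu : 0 ≤ u) :
    ‖T s (primOrb T x u) - primOrb T x u‖ ≤ s * (M * (u * (M * ‖y‖))) := by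
  rw [diff_eq hTadd hTcont hs hu]
  have hb : ∀ t ∈ Set.uIoc (0:ℝ) s, ‖orb T x (t + u) - orb T x t‖ ≤ M * (u * (M * ‖y‖)) := by
    intro t ht
    rw [Set.uIoc_of_le hs] at ht
    have ht0 : (0:ℝ) ≤ t := ht.1.le
    rw [orb_eq (by linarith : (0:ℝ) ≤ t + u), orb_eq ht0]
    have e : T (t + u) x = T t (T u x) := by rw [hTadd t u ht0 hu]; rfl
    rw [e, ← map_sub]
    refine le_trans ((T t).le_opNorm _) ?_
    have h1 : ‖T u x - x‖ ≤ u * (M * ‖y‖) := norm_Tsub_le hT0 hTadd hTcont hM hx hu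
    have h2 : (0:ℝ) ≤ M := le_trans (norm_nonneg _) (hM 0 le_rfl)
    exact mul_le_mul (hM t ht0) h1 (norm_nonneg _) h2
  have := intervalIntegral.norm_integral_le_of_norm_le_const (a := 0) (b := s)
    (C := M * (u * (M * ‖y‖))) (f := fun t => orb T x (t + u) - orb T x t) hb
  simpa [abs_of_nonneg hs, mul_comm] using this

lemma norm_primOrb_le (hTcont : ∀ x : X, ContinuousOn (fun t => T t x) (Ici (0 : ℝ)))
    (hM : ∀ t : ℝ, 0 ≤ t → ‖T t‖ ≤ M) {a b : ℝ} (hab : a ≤ b) :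
    ‖primOrb T x b - primOrb T x a‖ ≤ (b - a) * (M * ‖x‖) := by
  have hint : ∀ a b : ℝ, IntervalIntegrable (orb T x) volume a b :=
    fun a b => (orb_cont hTcont).intervalIntegrable a b
  have e3 : primOrb T x a + (∫ t in a..b, orb T x t) = primOrb T x b :=
    intervalIntegral.integral_add_adjacent_intervals (hint 0 a) (hint a b)
  have e4 : primOrb T x b - primOrb T x a = ∫ t in a..b, orb T x t := by
    rw [← e3]; abel
  rw [e4]
  have := intervalIntegral.norm_integral_le_of_norm_le_const (a := a) (b := b)
    (C := M * ‖x‖) (f := orb T x) (fun t _ => orb_norm_le hM t)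
  simpa [abs_of_nonneg (by linarith : (0:ℝ) ≤ b - a), mul_comm] using this

lemma bound_b (hTadd : ∀ s t : ℝ, 0 ≤ s → 0 ≤ t → T (s + t) = (T s).comp (T t))
    (hTcont : ∀ x : X, ContinuousOn (fun t => T t x) (Ici (0 : ℝ)))
    (hM : ∀ t : ℝ, 0 ≤ t → ‖T t‖ ≤ M)
    {s u : ℝ} (hs : 0 ≤ s) (hu : 0 ≤ u) :
    ‖T s (primOrb T x u) - primOrb T x u‖ ≤ s * (M * ‖x‖ + M * ‖x‖) := by
  rw [Ts_primOrb hTadd hTcont hs hu]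
  have h1 : ‖primOrb T x (u+s) - primOrb T x u‖ ≤ s * (M * ‖x‖) := by
    have := norm_primOrb_le (x := x) hTcont hM (by linarith : u ≤ u + s)
    simpa using this
  have h2 : ‖primOrb T x s - primOrb T x 0‖ ≤ s * (M * ‖x‖) := by
    have := norm_primOrb_le (x := x) hTcont hM hs
    simpa using this
  have hP0 : primOrb T x 0 = 0 := intervalIntegral.integral_same
  rw [hP0, sub_zero] at h2
  have e : primOrb T x (u+s) - primOrb T x s - primOrb T x u
      = (primOrb T x (u+s) - primOrb T x u) - primOrb T x s := by abel
  rw [e, mul_add]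
  exact le_trans (norm_sub_le _ _) (add_le_add h1 h2)

lemma tendsto_gen_primOrb (hT0 : T 0 = ContinuousLinearMap.id ℂ X)
    (hTadd : ∀ s t : ℝ, 0 ≤ s → 0 ≤ t → T (s + t) = (T s).comp (T t))
    (hTcont : ∀ x : X, ContinuousOn (fun t => T t x) (Ici (0 : ℝ)))
    {u : ℝ} (hu : 0 ≤ u) :
    Tendsto (fun s => s⁻¹ • (T s (primOrb T x u) - primOrb T x u)) (𝓝[>] (0:ℝ))
      (𝓝 (T u x - x)) := by
  have h1 := tendsto_avg (x := x) hTcont u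
  have h2 := tendsto_avg (x := x) hTcont 0
  have h3 := h1.sub h2
  rw [orb_eq hu, orb_eq le_rfl, hT0] at h3
  refine Tendsto.congr' ?_ h3
  filter_upwards [eventually_mem_nhdsWithin] with s (hs : 0 < s)
  have hint : ∀ a b : ℝ, IntervalIntegrable (orb T x) volume a b :=
    fun a b => (orb_cont hTcont).intervalIntegrable a b
  have hTs : T s (primOrb T x u) = primOrb T x (u + s) - primOrb T x s := by
    have e1 : T s (primOrb T x u) = ∫ t in (0:ℝ)..u, T s (orb T x t) := by
      exact ((T s).intervalIntegral_comp_comm (hint 0 u)).symm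
    have e2 : ∀ t ∈ Set.uIcc (0:ℝ) u, T s (orb T x t) = orb T x (t + s) := by
      intro t ht
      rw [Set.uIcc_of_le hu] at ht
      have ht0 : (0:ℝ) ≤ t := ht.1
      rw [orb_eq ht0, orb_eq (by linarith [hs.le] : (0:ℝ) ≤ t + s)]
      have := hTadd s t hs.le ht0
      rw [add_comm t s, this]; rfl
    rw [e1, intervalIntegral.integral_congr e2,
      intervalIntegral.integral_comp_add_right (orb T x) s, zero_add]
    have e3 : primOrb T x s + (∫ t in s..(u+s), orb T x t) = primOrb T x (u+s) :=
      intervalIntegral.integral_add_adjacent_intervals (hint 0 s) (hint s (u+s))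
    have : (∫ t in s..(u+s), orb T x t) = primOrb T x (u+s) - primOrb T x s := by
      rw [← e3]; abel
    rw [this]
  have hP0 : primOrb T x 0 = 0 := intervalIntegral.integral_same
  rw [hTs, hP0, zero_add, sub_zero, ← smul_sub]
  congr 1
  abel

end Stmt12Aux

open Stmt12Aux

/-- Let `ρ` be a positive Borel measure on `(0,∞)` with `ρ((0,r]) < ∞`
and `∫_{(r,∞)} u⁻¹ dρ(u) < ∞` for all `r > 0`, and `f(r) := ∫_{(r,∞)} u⁻¹ dρ(u)`.
Define the Bochner–Phillips operator `ψ(A)x := ∫_{(0,∞)} u⁻¹ • (T(u)x − x) dρ(u)`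
(which exists for every `x ∈ D(A)`) and the Hille–Phillips operator
`ψ̃(A)x := ∫₀^∞ f(t) • T(t)x dt` with domain `D₀(ψ̃(A))`. Then for every
`x ∈ D(A) ∩ D₀(ψ̃(A))`: `ψ̃(A)x ∈ D(A)` and `A(ψ̃(A)x) = ψ(A)x`. -/
theorem stmt12 {X : Type*} [NormedAddCommGroup X] [NormedSpace ℂ X] [CompleteSpace X]
    (T : ℝ → X →L[ℂ] X)
    (hT0 : T 0 = ContinuousLinearMap.id ℂ X)
    (hTadd : ∀ s t : ℝ, 0 ≤ s → 0 ≤ t → T (s + t) = (T s).comp (T t))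
    (hTcont : ∀ x : X, ContinuousOn (fun t => T t x) (Ici (0 : ℝ)))
    (hTbdd : ∃ M : ℝ, ∀ t : ℝ, 0 ≤ t → ‖T t‖ ≤ M)
    (ρ : Measure ℝ)
    (hρfin : ∀ r : ℝ, 0 < r → ρ (Ioc (0 : ℝ) r) < ⊤)
    (hρint : ∀ r : ℝ, 0 < r → IntegrableOn (fun u : ℝ => u⁻¹) (Ioi r) ρ) :
    ∀ x y : X, IsGen T x y →
      IntegrableOn (fun u => u⁻¹ • (T u x - x)) (Ioi (0 : ℝ)) ρ ∧
      (IntegrableOn (fun t => (∫ u in Ioi t, u⁻¹ ∂ρ) • T t x) (Ici (0 : ℝ)) volume →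
        IsGen T (∫ t in Ici (0 : ℝ), (∫ u in Ioi t, u⁻¹ ∂ρ) • T t x)
          (∫ u in Ioi (0 : ℝ), u⁻¹ • (T u x - x) ∂ρ)) := by

  intro x y hx
  obtain ⟨M, hM⟩ := hTbdd
  have hM0 : (0:ℝ) ≤ M := le_trans (norm_nonneg _) (hM 0 le_rfl)
  refine ⟨part1 hT0 hTadd hTcont hM hρfin hρint hx, ?_⟩
  intro hint
  -- σ-finiteness of the restricted measure
  haveI hνsf : SigmaFinite (ρ.restrict (Ioi (0:ℝ))) := by
    refine ⟨⟨⟨fun n => Iic 0 ∪ Ioc 0 (n+1), fun _ => trivial, fun n => ?_, ?_⟩⟩⟩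
    · refine lt_of_le_of_lt (measure_union_le _ _) ?_
      have h2 : (ρ.restrict (Ioi (0:ℝ))) (Iic 0) = 0 := by
        rw [Measure.restrict_apply measurableSet_Iic]
        have : Iic (0:ℝ) ∩ Ioi 0 = ∅ := by
          ext u; simp only [mem_inter_iff, mem_Iic, mem_Ioi, mem_empty_iff_false, iff_false]
          intro h; linarith [h.1, h.2]
        rw [this, measure_empty]
      have h3 : (ρ.restrict (Ioi (0:ℝ))) (Ioc 0 (n+1)) < ⊤ := by
        rw [Measure.restrict_apply measurableSet_Ioc]
        exact lt_of_le_of_lt (measure_mono inter_subset_left)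
          (hρfin (n+1) (by positivity))
      rw [h2, zero_add]
      exact h3
    · ext u
      simp only [mem_iUnion, mem_union, mem_Iic, mem_Ioc, mem_univ, iff_true]
      rcases le_or_gt u 0 with h | h
      · exact ⟨0, Or.inl h⟩
      · refine ⟨⌈u⌉₊, Or.inr ⟨h, ?_⟩⟩
        have := Nat.le_ceil u
        push_cast
        linarith
  have hgcont : Continuous (orb T x) := orb_cont hTcont
  have hPcont : Continuous (primOrb T x) := primOrb_cont hTcont
  -- the jointly measurable kernel
  set F : ℝ × ℝ → X :=
    fun q => Set.indicator {q : ℝ × ℝ | q.1 < q.2} (fun q => q.2⁻¹ • orb T x q.1) q with hFdef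
  have hFmeas : AEStronglyMeasurable F
      ((volume.restrict (Ici (0:ℝ))).prod (ρ.restrict (Ioi (0:ℝ)))) := by
    refine StronglyMeasurable.aestronglyMeasurable ?_
    refine StronglyMeasurable.indicator ?_ (measurableSet_lt measurable_fst measurable_snd)
    exact (measurable_snd.inv).stronglyMeasurable.smul
      (hgcont.comp continuous_fst).stronglyMeasurable
  -- a.e. positivity
  have hμpos : ∀ᵐ t ∂(volume.restrict (Ici (0:ℝ))), 0 < t := by
    have h1 : ∀ᵐ t ∂(volume.restrict (Ici (0:ℝ))), t ∈ Ici (0:ℝ) :=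
      ae_restrict_mem measurableSet_Ici
    have h2 : ∀ᵐ t ∂(volume.restrict (Ici (0:ℝ))), t ≠ 0 := by
      refine ae_iff.mpr ?_
      have : {t : ℝ | ¬ t ≠ 0} = {0} := by ext t; simp
      rw [this]
      exact le_antisymm (le_trans (Measure.restrict_le_self _) (by simp)) zero_le
    filter_upwards [h1, h2] with t h1 h2
    exact lt_of_le_of_ne h1 (Ne.symm h2)
  have hνpos : ∀ᵐ u ∂(ρ.restrict (Ioi (0:ℝ))), 0 < u := ae_restrict_mem measurableSet_Ioi
  -- slices
  have hsliceu : ∀ t : ℝ, (fun u => F (t, u)) = (Ioi t).indicator (fun u => u⁻¹ • orb T x t) := by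
    intro t; funext u
    simp only [hFdef, Set.indicator, mem_setOf_eq, mem_Ioi]
  have hslicet : ∀ u : ℝ, (fun t => F (t, u)) = (Iio u).indicator (fun t => u⁻¹ • orb T x t) := by
    intro u; funext t
    simp only [hFdef, Set.indicator, mem_setOf_eq, mem_Iio]
  have hIoi_inter : ∀ t : ℝ, 0 ≤ t → Ioi t ∩ Ioi (0:ℝ) = Ioi t := by
    intro t ht; rw [Ioi_inter_Ioi, max_eq_left ht]
  -- nonnegativity of f t
  have hfnn : ∀ t : ℝ, 0 ≤ t → 0 ≤ ∫ u in Ioi t, u⁻¹ ∂ρ := by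
    intro t ht
    refine setIntegral_nonneg measurableSet_Ioi (fun u hu => ?_)
    exact inv_nonneg.mpr (le_of_lt (lt_of_le_of_lt ht hu))
  -- integrability of F on the product
  have hFint : Integrable F
      ((volume.restrict (Ici (0:ℝ))).prod (ρ.restrict (Ioi (0:ℝ)))) := by
    refine (integrable_prod_iff hFmeas).mpr ⟨?_, ?_⟩
    · filter_upwards [hμpos] with t ht
      rw [hsliceu t]
      rw [integrable_indicator_iff measurableSet_Ioi]
      rw [IntegrableOn, Measure.restrict_restrict measurableSet_Ioi, hIoi_inter t ht.le]
      exact (hρint t ht).smul_const (orb T x t)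
    · have heq : ∀ᵐ t ∂(volume.restrict (Ici (0:ℝ))),
          (∫ u, ‖F (t, u)‖ ∂(ρ.restrict (Ioi (0:ℝ))))
            = (∫ u in Ioi t, u⁻¹ ∂ρ) * ‖orb T x t‖ := by
        filter_upwards [hμpos] with t ht
        have e1 : (fun u => ‖F (t, u)‖)
            =ᵐ[ρ.restrict (Ioi (0:ℝ))] (Ioi t).indicator (fun u => u⁻¹ * ‖orb T x t‖) := by
          filter_upwards [hνpos] with u hu
          rw [show F (t, u) = (Ioi t).indicator (fun u => u⁻¹ • orb T x t) u from
            congrFun (hsliceu t) u]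
          by_cases h : u ∈ Ioi t
          · rw [Set.indicator_of_mem h, Set.indicator_of_mem h, norm_smul,
              Real.norm_eq_abs, abs_of_pos (inv_pos.mpr hu)]
          · rw [Set.indicator_of_notMem h, Set.indicator_of_notMem h, norm_zero]
        rw [integral_congr_ae e1, integral_indicator measurableSet_Ioi,
          Measure.restrict_restrict measurableSet_Ioi, hIoi_inter t ht.le,
          integral_mul_const]
      refine Integrable.congr (Integrable.congr hint.norm ?_)
        (Filter.EventuallyEq.symm heq)
      filter_upwards [hμpos] with t ht
      rw [norm_smul, Real.norm_eq_abs, abs_of_nonneg (hfnn t ht.le), orb_eq ht.le]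
  -- inner integral in u
  have hinner_u : ∀ᵐ t ∂(volume.restrict (Ici (0:ℝ))),
      (∫ u, F (t, u) ∂(ρ.restrict (Ioi (0:ℝ))))
        = (∫ u in Ioi t, u⁻¹ ∂ρ) • orb T x t := by
    filter_upwards [hμpos] with t ht
    rw [hsliceu t, integral_indicator measurableSet_Ioi,
      Measure.restrict_restrict measurableSet_Ioi, hIoi_inter t ht.le, integral_smul_const]
  -- inner integral in t
  have hinner_t : ∀ᵐ u ∂(ρ.restrict (Ioi (0:ℝ))),
      (∫ t, F (t, u) ∂(volume.restrict (Ici (0:ℝ))))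
        = u⁻¹ • primOrb T x u := by
    filter_upwards [hνpos] with u hu
    rw [hslicet u, integral_indicator measurableSet_Iio,
      Measure.restrict_restrict measurableSet_Iio]
    have e2 : Iio u ∩ Ici (0:ℝ) = Ico 0 u := by
      ext t; simp only [mem_inter_iff, mem_Iio, mem_Ici, mem_Ico]; tauto
    rw [e2, integral_smul]
    congr 1
    rw [integral_Ico_eq_integral_Ioo, ← integral_Ioc_eq_integral_Ioo,
      ← intervalIntegral.integral_of_le hu.le]
    rfl
  -- the Hille-Phillips vector equals the ν-integral of u⁻¹ • primOrb
  have hvrep : (∫ t in Ici (0:ℝ), (∫ u in Ioi t, u⁻¹ ∂ρ) • T t x)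
      = ∫ u, u⁻¹ • primOrb T x u ∂(ρ.restrict (Ioi (0:ℝ))) := by
    have swap := integral_integral_swap (f := fun t u => F (t, u)) (by exact hFint)
    have lhs1 : (∫ t in Ici (0:ℝ), (∫ u in Ioi t, u⁻¹ ∂ρ) • T t x)
        = ∫ t, ∫ u, F (t, u) ∂(ρ.restrict (Ioi (0:ℝ))) ∂(volume.restrict (Ici (0:ℝ))) := by
      refine (integral_congr_ae ?_).symm
      filter_upwards [hinner_u, hμpos] with t h1 ht
      rw [h1, orb_eq ht.le]
    rw [lhs1, swap]
    exact integral_congr_ae hinner_t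
  have hPint : Integrable (fun u => u⁻¹ • primOrb T x u) (ρ.restrict (Ioi (0:ℝ))) := by
    refine Integrable.congr (Integrable.integral_prod_right (f := F) (by exact hFint)) ?_
    exact hinner_t
  -- the quotient identity for each s > 0
  have hident : ∀ᶠ s in 𝓝[>] (0:ℝ),
      s⁻¹ • (T s (∫ t in Ici (0:ℝ), (∫ u in Ioi t, u⁻¹ ∂ρ) • T t x)
          - (∫ t in Ici (0:ℝ), (∫ u in Ioi t, u⁻¹ ∂ρ) • T t x))
        = ∫ u, u⁻¹ • (s⁻¹ • (T s (primOrb T x u) - primOrb T x u))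
            ∂(ρ.restrict (Ioi (0:ℝ))) := by
    filter_upwards [eventually_mem_nhdsWithin] with s (hs : 0 < s)
    have h2 : Integrable (fun u => T s (u⁻¹ • primOrb T x u)) (ρ.restrict (Ioi (0:ℝ))) :=
      ContinuousLinearMap.integrable_comp (T s) hPint
    have h1 : T s (∫ t in Ici (0:ℝ), (∫ u in Ioi t, u⁻¹ ∂ρ) • T t x)
        = ∫ u, T s (u⁻¹ • primOrb T x u) ∂(ρ.restrict (Ioi (0:ℝ))) := by
      rw [hvrep]
      exact (ContinuousLinearMap.integral_comp_comm (T s) hPint).symm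
    rw [h1, hvrep, ← integral_sub h2 hPint, ← integral_smul]
    refine integral_congr_ae (Eventually.of_forall (fun u => ?_))
    have e : T s ((u⁻¹ : ℝ) • primOrb T x u) = u⁻¹ • T s (primOrb T x u) :=
      ((T s).restrictScalars ℝ).map_smul u⁻¹ (primOrb T x u)
    beta_reduce
    rw [e, ← smul_sub, smul_comm]
  -- dominated convergence
  have hν1 : (ρ.restrict (Ioi (0:ℝ))) (Ioc (0:ℝ) 1) < ⊤ := by
    rw [Measure.restrict_apply measurableSet_Ioc]
    exact lt_of_le_of_lt (measure_mono inter_subset_left) (hρfin 1 one_pos)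
  have hbint : Integrable
      (fun u : ℝ => if u ≤ 1 then M * (M * ‖y‖) else (M * ‖x‖ + M * ‖x‖) * u⁻¹)
      (ρ.restrict (Ioi (0:ℝ))) := by
    have hsplit : Ioc (0:ℝ) 1 ∪ Ioi 1 = Ioi 0 := Ioc_union_Ioi_eq_Ioi zero_le_one
    have : IntegrableOn
        (fun u : ℝ => if u ≤ 1 then M * (M * ‖y‖) else (M * ‖x‖ + M * ‖x‖) * u⁻¹)
        (Ioc (0:ℝ) 1 ∪ Ioi 1) ρ := by
      refine IntegrableOn.union ?_ ?_
      · refine Integrable.congr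
          (integrableOn_const (hρfin 1 one_pos).ne
            : IntegrableOn (fun _ : ℝ => M * (M * ‖y‖)) (Ioc (0:ℝ) 1) ρ) ?_
        rw [Filter.eventuallyEq_iff_exists_mem]
        refine ⟨Ioc (0:ℝ) 1, ?_, fun u hu => ?_⟩
        · exact Filter.mem_of_superset (ae_restrict_mem measurableSet_Ioc)
            (fun u hu => hu)
        · have h1 : u ≤ 1 := hu.2
          simp [h1]
      · refine Integrable.congr (((hρint 1 one_pos)).const_mul (M * ‖x‖ + M * ‖x‖)) ?_
        rw [Filter.eventuallyEq_iff_exists_mem]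
        refine ⟨Ioi (1:ℝ), ?_, fun u hu => ?_⟩
        · exact Filter.mem_of_superset (ae_restrict_mem measurableSet_Ioi)
            (fun u hu => hu)
        · have h1 : ¬ u ≤ 1 := not_le.mpr hu
          simp [h1]
    rw [hsplit] at this
    exact this
  have htends : Tendsto
      (fun s => ∫ u, u⁻¹ • (s⁻¹ • (T s (primOrb T x u) - primOrb T x u))
          ∂(ρ.restrict (Ioi (0:ℝ))))
      (𝓝[>] (0:ℝ))
      (𝓝 (∫ u in Ioi (0:ℝ), u⁻¹ • (T u x - x) ∂ρ)) := by
    refine tendsto_integral_filter_of_dominated_convergence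
      (fun u : ℝ => if u ≤ 1 then M * (M * ‖y‖) else (M * ‖x‖ + M * ‖x‖) * u⁻¹)
      ?_ ?_ hbint ?_
    · refine Eventually.of_forall (fun s => ?_)
      refine ContinuousOn.aestronglyMeasurable ?_ measurableSet_Ioi
      refine (continuousOn_id.inv₀ (fun u hu => ne_of_gt hu)).smul ?_
      exact (continuousOn_const.smul
        ((((T s).continuous.comp hPcont).sub hPcont).continuousOn))
    · filter_upwards [eventually_mem_nhdsWithin] with s (hs : 0 < s)
      rw [ae_restrict_iff' measurableSet_Ioi]
      refine Eventually.of_forall (fun u hu => ?_)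
      beta_reduce
      have hu0 : (0:ℝ) < u := hu
      have hnn : (0:ℝ) ≤ u⁻¹ := le_of_lt (inv_pos.mpr hu0)
      have hsn : (0:ℝ) ≤ s⁻¹ := le_of_lt (inv_pos.mpr hs)
      rw [norm_smul, norm_smul, Real.norm_eq_abs, abs_of_nonneg hnn,
        Real.norm_eq_abs, abs_of_nonneg hsn]
      by_cases hle : u ≤ 1
      · rw [if_pos hle]
        have hb := bound_a hT0 hTadd hTcont hM hx hs.le hu0.le (x := x) (y := y)
        calc u⁻¹ * (s⁻¹ * ‖T s (primOrb T x u) - primOrb T x u‖)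
            ≤ u⁻¹ * (s⁻¹ * (s * (M * (u * (M * ‖y‖))))) := by
              refine mul_le_mul_of_nonneg_left (mul_le_mul_of_nonneg_left hb hsn) hnn
          _ = M * (M * ‖y‖) := by
              field_simp
              try ring
      · rw [if_neg hle]
        have hb := bound_b hTadd hTcont hM hs.le hu0.le (x := x)
        calc u⁻¹ * (s⁻¹ * ‖T s (primOrb T x u) - primOrb T x u‖)
            ≤ u⁻¹ * (s⁻¹ * (s * (M * ‖x‖ + M * ‖x‖))) := by
              refine mul_le_mul_of_nonneg_left (mul_le_mul_of_nonneg_left hb hsn) hnn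
          _ = (M * ‖x‖ + M * ‖x‖) * u⁻¹ := by
              field_simp
              try ring
    · filter_upwards [hνpos] with u hu
      exact (tendsto_gen_primOrb hT0 hTadd hTcont hu.le).const_smul u⁻¹
  exact Tendsto.congr' (Filter.EventuallyEq.symm hident) htends
end
end
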